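/- Assume good X and good Y. Then swapping distributes over substitution: Y[X/x]_xs[z₁ ∧ z₂]_zs = (Y[z₁ ∧ z₂]_zs)[(X[z₁ ∧ z₂]_zs)/(x[z₁ ∧ z₂]_{xs,zs})]_xs, where x[z₁ ∧ z₂]_{xs,zs} denotes the transposition of z₁ and z₂ applied to x if xs = zs, and x otherwise. -/

import Mathlib

open scoped Classical

universe u

section Binding

variable (var varsort index bindex opsym : Type u)

/-! ### Inputs -/

/-- An `(α,β)`-input: a partial function from `α` to `β`. -/
abbrev Input (α β : Type u) : Type u := α → Option β

/-- The domain of an input. -/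
def idom {α β : Type u} (inp : Input α β) : Set α := {a | inp a ≠ none}

/-- The componentwise lifting of a predicate to inputs. -/
def liftP {α β : Type u} (P : β → Prop) (inp : Input α β) : Prop :=
  ∀ a b, inp a = some b → P b

/-- The componentwise lifting of a function to inputs. -/
def liftF {α β γ : Type u} (f : β → γ) (inp : Input α β) : Input α γ :=
  fun a => (inp a).map f

/-- An input is small if its domain has cardinality smaller than that of `var`. -/
def smallDom {α β : Type u} (inp : Input α β) : Prop :=
  Cardinal.mk (idom inp) < Cardinal.mk var

/-! ### Quasiterms -/

mutual
/-- Quasiterms: raw terms before quotienting by alpha-equivalence. -/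
inductive QTerm : Type u where
  | qVar : varsort → var → QTerm
  | qOp : opsym → (index → Option QTerm) → (bindex → Option QAbs) → QTerm
/-- Quasiabstractions. -/
inductive QAbs : Type u where
  | qAbs : varsort → var → QTerm → QAbs
end

/-- Transposition of two variables. -/
noncomputable def swapVar (z1 z2 x : var) : var :=
  if x = z1 then z2 else if x = z2 then z1 else x

/-- Sort-aware transposition of variables (acts only on variables of varsort `zs`). -/
noncomputable def swapVarS (zs xs : varsort) (z1 z2 x : var) : var :=
  if xs = zs then swapVar var z1 z2 x else x

variable {var varsort index bindex opsym}

/-- Swapping of the variables `z1`, `z2` at varsort `zs` in a quasiterm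
(transposing them everywhere, including binding positions). -/
noncomputable def qSwap (z1 z2 : var) (zs : varsort) :
    QTerm var varsort index bindex opsym → QTerm var varsort index bindex opsym :=
  QTerm.rec (motive_1 := fun _ => QTerm var varsort index bindex opsym)
    (motive_2 := fun _ => QAbs var varsort index bindex opsym)
    (motive_3 := fun _ => Option (QTerm var varsort index bindex opsym))
    (motive_4 := fun _ => Option (QAbs var varsort index bindex opsym))
    (fun xs x => .qVar xs (swapVarS var varsort zs xs z1 z2 x))
    (fun d _ _ rinp rbinp => .qOp d rinp rbinp)
    (fun xs x _ rX => .qAbs xs (swapVarS var varsort zs xs z1 z2 x) rX)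
    none (fun _ r => some r) none (fun _ r => some r)

/-- Swapping of variables in a quasiabstraction. -/
noncomputable def qSwapAbs (z1 z2 : var) (zs : varsort) :
    QAbs var varsort index bindex opsym → QAbs var varsort index bindex opsym
  | .qAbs xs x X => .qAbs xs (swapVarS var varsort zs xs z1 z2 x) (qSwap z1 z2 zs X)

/-! ### Freshness and goodness -/

mutual
/-- `QFresh ys y X`: the variable `y` of varsort `ys` has no free occurrence in `X`. -/
inductive QFresh : varsort → var → QTerm var varsort index bindex opsym → Prop where
  | qVar : ∀ {ys y xs x}, (ys, y) ≠ (xs, x) → QFresh ys y (.qVar xs x)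
  | qOp : ∀ {ys y d inp binp}, (∀ i X, inp i = some X → QFresh ys y X) →
      (∀ j A, binp j = some A → QFreshAbs ys y A) → QFresh ys y (.qOp d inp binp)
/-- Freshness for quasiabstractions. -/
inductive QFreshAbs : varsort → var → QAbs var varsort index bindex opsym → Prop where
  | qAbs_bound : ∀ {xs x X}, QFreshAbs xs x (.qAbs xs x X)
  | qAbs_body : ∀ {ys y xs x X}, QFresh ys y X → QFreshAbs ys y (.qAbs xs x X)
end

mutual
/-- Good quasiterms: all constructors branch less than `|var|`. -/
inductive QGood : QTerm var varsort index bindex opsym → Prop where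
  | qVar : ∀ {xs x}, QGood (.qVar xs x)
  | qOp : ∀ {d inp binp}, (∀ i X, inp i = some X → QGood X) →
      (∀ j A, binp j = some A → QGoodAbs A) →
      smallDom var inp → smallDom var binp → QGood (.qOp d inp binp)
/-- Good quasiabstractions. -/
inductive QGoodAbs : QAbs var varsort index bindex opsym → Prop where
  | qAbs : ∀ {xs x X}, QGood X → QGoodAbs (.qAbs xs x X)
end

/-! ### Alpha-equivalence -/

mutual
/-- Alpha-equivalence of quasiterms. -/
inductive Alpha : QTerm var varsort index bindex opsym →
    QTerm var varsort index bindex opsym → Prop where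
  | qVar : ∀ {xs x}, Alpha (.qVar xs x) (.qVar xs x)
  | qOp : ∀ {d inp binp inp' binp'},
      (∀ i, inp i = none ↔ inp' i = none) →
      (∀ i X X', inp i = some X → inp' i = some X' → Alpha X X') →
      (∀ j, binp j = none ↔ binp' j = none) →
      (∀ j A A', binp j = some A → binp' j = some A' → AlphaAbs A A') →
      Alpha (.qOp d inp binp) (.qOp d inp' binp')
/-- Alpha-equivalence of quasiabstractions (the exists-fresh formulation). -/
inductive AlphaAbs : QAbs var varsort index bindex opsym →
    QAbs var varsort index bindex opsym → Prop where
  | qAbs : ∀ {xs x x' X X' y}, y ∉ ({x, x'} : Set var) →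
      QFresh xs y X → QFresh xs y X' →
      Alpha (qSwap y x xs X) (qSwap y x' xs X') →
      AlphaAbs (.qAbs xs x X) (.qAbs xs x' X')
end

/-! ### Terms and abstractions as quotients -/

variable (var varsort index bindex opsym)

/-- Terms: quasiterms modulo alpha-equivalence. -/
def Term : Type u := Quot (@Alpha var varsort index bindex opsym)

/-- Abstractions: quasiabstractions modulo alpha-equivalence. -/
def Abstr : Type u := Quot (@AlphaAbs var varsort index bindex opsym)

variable {var varsort index bindex opsym}

/-- The projection from quasiterms to terms. -/
def tmk : QTerm var varsort index bindex opsym → Term var varsort index bindex opsym :=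
  Quot.mk _

/-- The projection from quasiabstractions to abstractions. -/
def amk : QAbs var varsort index bindex opsym → Abstr var varsort index bindex opsym :=
  Quot.mk _

/-- A representative of a term. -/
noncomputable def trep (X : Term var varsort index bindex opsym) :
    QTerm var varsort index bindex opsym := Quot.out X

/-- A representative of an abstraction. -/
noncomputable def arep (A : Abstr var varsort index bindex opsym) :
    QAbs var varsort index bindex opsym := Quot.out A

/-- Good terms. -/
def good (X : Term var varsort index bindex opsym) : Prop := QGood (trep X)

/-- Good abstractions. -/
def goodAbs (A : Abstr var varsort index bindex opsym) : Prop := QGoodAbs (arep A)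

/-- The variable-injection constructor on terms. -/
def Var (xs : varsort) (x : var) : Term var varsort index bindex opsym :=
  tmk (.qVar xs x)

/-- The operation constructor on terms. -/
noncomputable def Op (d : opsym) (inp : Input index (Term var varsort index bindex opsym))
    (binp : Input bindex (Abstr var varsort index bindex opsym)) :
    Term var varsort index bindex opsym :=
  tmk (.qOp d (liftF trep inp) (liftF arep binp))

/-- The abstraction constructor. -/
noncomputable def Abs (xs : varsort) (x : var) (X : Term var varsort index bindex opsym) :
    Abstr var varsort index bindex opsym :=
  amk (.qAbs xs x (trep X))

/-- Freshness on terms. -/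
def fresh (ys : varsort) (y : var) (X : Term var varsort index bindex opsym) : Prop :=
  QFresh ys y (trep X)

/-- Freshness on abstractions. -/
def freshAbs (ys : varsort) (y : var) (A : Abstr var varsort index bindex opsym) : Prop :=
  QFreshAbs ys y (arep A)

/-- Swapping on terms. -/
noncomputable def tswap (X : Term var varsort index bindex opsym)
    (z1 z2 : var) (zs : varsort) : Term var varsort index bindex opsym :=
  tmk (qSwap z1 z2 zs (trep X))

/-! ### Substitution -/

mutual
/-- The graph of capture-avoiding substitution on quasiterms:
`QSubst X Y y ys Z` means that `Z` is a result of substituting `Y` for the free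
occurrences of the variable `y` of varsort `ys` in `X` (along a capture-free
representative). -/
inductive QSubst : QTerm var varsort index bindex opsym →
    QTerm var varsort index bindex opsym → var → varsort →
    QTerm var varsort index bindex opsym → Prop where
  | var_eq : ∀ {Y y ys}, QSubst (.qVar ys y) Y y ys Y
  | var_ne : ∀ {Y y ys xs x}, (xs, x) ≠ (ys, y) → QSubst (.qVar xs x) Y y ys (.qVar xs x)
  | op : ∀ {Y y ys d inp binp inp' binp'},
      (∀ i, inp i = none ↔ inp' i = none) →
      (∀ i X X', inp i = some X → inp' i = some X' → QSubst X Y y ys X') →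
      (∀ j, binp j = none ↔ binp' j = none) →
      (∀ j A A', binp j = some A → binp' j = some A' → QSubstAbs A Y y ys A') →
      QSubst (.qOp d inp binp) Y y ys (.qOp d inp' binp')
/-- The graph of capture-avoiding substitution on quasiabstractions. -/
inductive QSubstAbs : QAbs var varsort index bindex opsym →
    QTerm var varsort index bindex opsym → var → varsort →
    QAbs var varsort index bindex opsym → Prop where
  | abs : ∀ {Y y ys xs x X X'}, (xs, x) ≠ (ys, y) → QFresh xs x Y →
      QSubst X Y y ys X' → QSubstAbs (.qAbs xs x X) Y y ys (.qAbs xs x X')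
end

/-- The graph of capture-avoiding substitution on terms. -/
def SubstRel (X Y : Term var varsort index bindex opsym) (y : var) (ys : varsort)
    (Z : Term var varsort index bindex opsym) : Prop :=
  ∃ qX qZ, tmk qX = X ∧ tmk qZ = Z ∧ QSubst qX (trep Y) y ys qZ

/-- Capture-avoiding substitution on terms: `subst X Y y ys` is `X[Y/y]_ys`. -/
noncomputable def subst (X Y : Term var varsort index bindex opsym)
    (y : var) (ys : varsort) : Term var varsort index bindex opsym :=
  if h : ∃ Z, SubstRel X Y y ys Z then h.choose else X

/-- The graph of capture-avoiding substitution on abstractions. -/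
def SubstAbsRel (A : Abstr var varsort index bindex opsym)
    (Y : Term var varsort index bindex opsym) (y : var) (ys : varsort)
    (B : Abstr var varsort index bindex opsym) : Prop :=
  ∃ qA qB, amk qA = A ∧ amk qB = B ∧ QSubstAbs qA (trep Y) y ys qB

/-- Capture-avoiding substitution on abstractions: `substAbs A Y y ys` is `A[Y/y]_ys`. -/
noncomputable def substAbs (A : Abstr var varsort index bindex opsym)
    (Y : Term var varsort index bindex opsym) (y : var) (ys : varsort) :
    Abstr var varsort index bindex opsym :=
  if h : ∃ B, SubstAbsRel A Y y ys B then h.choose else A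

/-! ### Parallel substitution -/

mutual
/-- The graph of capture-avoiding parallel substitution on quasiterms, along an
assignment `ρ : varsort → var → Option qterm`. -/
inductive QPSubst : QTerm var varsort index bindex opsym →
    (varsort → var → Option (QTerm var varsort index bindex opsym)) →
    QTerm var varsort index bindex opsym → Prop where
  | var_some : ∀ {ρ xs x Y}, ρ xs x = some Y → QPSubst (.qVar xs x) ρ Y
  | var_none : ∀ {ρ xs x}, ρ xs x = none → QPSubst (.qVar xs x) ρ (.qVar xs x)
  | op : ∀ {ρ d inp binp inp' binp'},
      (∀ i, inp i = none ↔ inp' i = none) →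
      (∀ i X X', inp i = some X → inp' i = some X' → QPSubst X ρ X') →
      (∀ j, binp j = none ↔ binp' j = none) →
      (∀ j A A', binp j = some A → binp' j = some A' → QPSubstAbs A ρ A') →
      QPSubst (.qOp d inp binp) ρ (.qOp d inp' binp')
/-- The graph of capture-avoiding parallel substitution on quasiabstractions. -/
inductive QPSubstAbs : QAbs var varsort index bindex opsym →
    (varsort → var → Option (QTerm var varsort index bindex opsym)) →
    QAbs var varsort index bindex opsym → Prop where
  | abs : ∀ {ρ xs x X X'}, ρ xs x = none →
      (∀ ys y Y, ρ ys y = some Y → QFresh xs x Y) →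
      QPSubst X ρ X' → QPSubstAbs (.qAbs xs x X) ρ (.qAbs xs x X')
end

/-- Turning a term-valued assignment into a quasiterm-valued one, by picking
representatives. -/
noncomputable def qassign (ρ : varsort → var → Option (Term var varsort index bindex opsym)) :
    varsort → var → Option (QTerm var varsort index bindex opsym) :=
  fun xs x => (ρ xs x).map trep

/-- The graph of parallel substitution on terms. -/
def PSubstRel (X : Term var varsort index bindex opsym)
    (ρ : varsort → var → Option (Term var varsort index bindex opsym))
    (Z : Term var varsort index bindex opsym) : Prop :=
  ∃ qX qZ, tmk qX = X ∧ tmk qZ = Z ∧ QPSubst qX (qassign ρ) qZ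

/-- Capture-avoiding parallel substitution on terms: `psubst X ρ` is `X[ρ]`. -/
noncomputable def psubst (X : Term var varsort index bindex opsym)
    (ρ : varsort → var → Option (Term var varsort index bindex opsym)) :
    Term var varsort index bindex opsym :=
  if h : ∃ Z, PSubstRel X ρ Z then h.choose else X

/-- The graph of parallel substitution on abstractions. -/
def PSubstAbsRel (A : Abstr var varsort index bindex opsym)
    (ρ : varsort → var → Option (Term var varsort index bindex opsym))
    (B : Abstr var varsort index bindex opsym) : Prop :=
  ∃ qA qB, amk qA = A ∧ amk qB = B ∧ QPSubstAbs qA (qassign ρ) qB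

/-- Capture-avoiding parallel substitution on abstractions. -/
noncomputable def psubstAbs (A : Abstr var varsort index bindex opsym)
    (ρ : varsort → var → Option (Term var varsort index bindex opsym)) :
    Abstr var varsort index bindex opsym :=
  if h : ∃ B, PSubstAbsRel A ρ B then h.choose else A

section Dev
variable {var varsort index bindex opsym : Type u}

theorem swapVar_invol (z1 z2 x : var) :
    swapVar var z1 z2 (swapVar var z1 z2 x) = x := by
  unfold swapVar; split_ifs <;> simp_all

theorem swapVar_comm (z1 z2 x : var) : swapVar var z1 z2 x = swapVar var z2 z1 x := by
  unfold swapVar; split_ifs <;> simp_all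

theorem swapVar_same (z x : var) : swapVar var z z x = x := by
  unfold swapVar; split_ifs <;> simp_all

theorem swapVar_inj {z1 z2 x y : var}
    (h : swapVar var z1 z2 x = swapVar var z1 z2 y) : x = y := by
  have := congrArg (swapVar var z1 z2) h
  rwa [swapVar_invol, swapVar_invol] at this

theorem swapVar_swapVar (u v a b x : var) :
    swapVar var u v (swapVar var a b x)
      = swapVar var (swapVar var u v a) (swapVar var u v b) (swapVar var u v x) := by
  unfold swapVar; split_ifs <;> simp_all

theorem swapVar_of_ne {z1 z2 x : var} (h1 : x ≠ z1) (h2 : x ≠ z2) :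
    swapVar var z1 z2 x = x := by
  unfold swapVar; split_ifs <;> simp_all

theorem swapVar_left (z1 z2 : var) : swapVar var z1 z2 z1 = z2 := by
  unfold swapVar; split_ifs <;> simp_all

theorem swapVar_right (z1 z2 : var) : swapVar var z1 z2 z2 = z1 := by
  unfold swapVar; split_ifs <;> simp_all

theorem swapVarS_sort_eq (zs : varsort) (z1 z2 x : var) :
    swapVarS var varsort zs zs z1 z2 x = swapVar var z1 z2 x := by
  unfold swapVarS; rw [if_pos rfl]

theorem swapVarS_sort_ne {zs xs : varsort} (h : xs ≠ zs) (z1 z2 x : var) :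
    swapVarS var varsort zs xs z1 z2 x = x := by
  unfold swapVarS; rw [if_neg h]

theorem swapVarS_invol (zs xs : varsort) (z1 z2 x : var) :
    swapVarS var varsort zs xs z1 z2 (swapVarS var varsort zs xs z1 z2 x) = x := by
  unfold swapVarS; split_ifs <;> simp [swapVar_invol]

theorem swapVarS_same (zs xs : varsort) (z x : var) :
    swapVarS var varsort zs xs z z x = x := by
  unfold swapVarS; split_ifs <;> simp [swapVar_same]

theorem swapVarS_comm (zs xs : varsort) (z1 z2 x : var) :
    swapVarS var varsort zs xs z1 z2 x = swapVarS var varsort zs xs z2 z1 x := by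
  unfold swapVarS; split_ifs <;> simp [swapVar_comm]

theorem swapVarS_inj {zs xs : varsort} {z1 z2 x y : var}
    (h : swapVarS var varsort zs xs z1 z2 x = swapVarS var varsort zs xs z1 z2 y) : x = y := by
  have := congrArg (swapVarS var varsort zs xs z1 z2) h
  rwa [swapVarS_invol, swapVarS_invol] at this

theorem swapVarS_swapVarS (us zs xs : varsort) (u v a b x : var) :
    swapVarS var varsort us xs u v (swapVarS var varsort zs xs a b x)
      = swapVarS var varsort zs xs (swapVarS var varsort us zs u v a)
          (swapVarS var varsort us zs u v b) (swapVarS var varsort us xs u v x) := by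
  unfold swapVarS; split_ifs <;> (try rw [swapVar_swapVar]) <;> simp_all

theorem swapVarS_of_ne {zs xs : varsort} {z1 z2 x : var}
    (h1 : (zs, z1) ≠ (xs, x)) (h2 : (zs, z2) ≠ (xs, x)) :
    swapVarS var varsort zs xs z1 z2 x = x := by
  unfold swapVarS; split_ifs with h
  · subst h
    exact swapVar_of_ne (fun hx => h1 (by simp [hx])) (fun hx => h2 (by simp [hx]))
  · rfl

/-- Mutual structural induction for quasiterms. -/
theorem QTerm.my_induction {P : QTerm var varsort index bindex opsym → Prop}
    {Q : QAbs var varsort index bindex opsym → Prop}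
    (hvar : ∀ xs x, P (.qVar xs x))
    (hop : ∀ d inp binp, (∀ i X, inp i = some X → P X) →
      (∀ j A, binp j = some A → Q A) → P (.qOp d inp binp))
    (habs : ∀ xs x X, P X → Q (.qAbs xs x X)) :
    (∀ X, P X) ∧ (∀ A, Q A) := by
  have h : ∀ X, P X := fun X =>
    QTerm.rec (motive_1 := P) (motive_2 := Q)
      (motive_3 := fun o => ∀ Y, o = some Y → P Y)
      (motive_4 := fun o => ∀ A, o = some A → Q A)
      hvar (fun d inp binp rinp rbinp => hop d inp binp rinp rbinp)
      (fun xs x X rX => habs xs x X rX)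
      (fun Y h => nomatch h) (fun X rX Y h => (Option.some.inj h) ▸ rX)
      (fun A h => nomatch h) (fun A rA B h => (Option.some.inj h) ▸ rA) X
  refine ⟨h, fun A => ?_⟩
  cases A with
  | qAbs xs x X => exact habs xs x X (h X)

theorem qSwap_qVar (z1 z2 : var) (zs xs : varsort) (x : var) :
    qSwap z1 z2 zs (QTerm.qVar xs x : QTerm var varsort index bindex opsym)
      = .qVar xs (swapVarS var varsort zs xs z1 z2 x) := rfl

theorem qSwap_qOp (z1 z2 : var) (zs : varsort) (d : opsym)
    (inp : Input index (QTerm var varsort index bindex opsym))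
    (binp : Input bindex (QAbs var varsort index bindex opsym)) :
    qSwap z1 z2 zs (QTerm.qOp d inp binp)
      = .qOp d (fun i => (inp i).map (qSwap z1 z2 zs))
          (fun j => (binp j).map (qSwapAbs z1 z2 zs)) := by
  show QTerm.qOp _ _ _ = _
  congr 1
  · funext i; cases h : inp i <;> rfl
  · funext j; cases h : binp j with
    | none => rfl
    | some A => cases A; rfl

theorem qSwapAbs_qAbs (z1 z2 : var) (zs xs : varsort) (x : var)
    (X : QTerm var varsort index bindex opsym) :
    qSwapAbs z1 z2 zs (.qAbs xs x X)
      = .qAbs xs (swapVarS var varsort zs xs z1 z2 x) (qSwap z1 z2 zs X) := rfl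

theorem qSwap_same_and (z : var) (zs : varsort) :
    (∀ X : QTerm var varsort index bindex opsym, qSwap z z zs X = X) ∧
    (∀ A : QAbs var varsort index bindex opsym, qSwapAbs z z zs A = A) := by
  apply QTerm.my_induction
  · intro xs x; rw [qSwap_qVar, swapVarS_same]
  · intro d inp binp hi hb
    rw [qSwap_qOp]
    congr 1
    · funext i; cases h : inp i with
      | none => rfl
      | some X => simp [hi i X h]
    · funext j; cases h : binp j with
      | none => rfl
      | some A => simp [hb j A h]
  · intro xs x X hX
    rw [qSwapAbs_qAbs, swapVarS_same, hX]

theorem qSwap_qSwap_and (u v a b : var) (us zs : varsort) :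
    (∀ X : QTerm var varsort index bindex opsym,
      qSwap u v us (qSwap a b zs X)
        = qSwap (swapVarS var varsort us zs u v a) (swapVarS var varsort us zs u v b) zs
            (qSwap u v us X)) ∧
    (∀ A : QAbs var varsort index bindex opsym,
      qSwapAbs u v us (qSwapAbs a b zs A)
        = qSwapAbs (swapVarS var varsort us zs u v a) (swapVarS var varsort us zs u v b) zs
            (qSwapAbs u v us A)) := by
  apply QTerm.my_induction
  · intro xs x
    simp only [qSwap_qVar]
    rw [swapVarS_swapVarS]
  · intro d inp binp hi hb
    simp only [qSwap_qOp]
    congr 1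
    · funext i; cases h : inp i with
      | none => rfl
      | some X => simp [hi i X h]
    · funext j; cases h : binp j with
      | none => rfl
      | some A => simp [hb j A h]
  · intro xs x X hX
    simp only [qSwapAbs_qAbs]
    rw [swapVarS_swapVarS, hX]

theorem qSwap_qSwap (u v a b : var) (us zs : varsort)
    (X : QTerm var varsort index bindex opsym) :
    qSwap u v us (qSwap a b zs X)
      = qSwap (swapVarS var varsort us zs u v a) (swapVarS var varsort us zs u v b) zs
          (qSwap u v us X) :=
  (qSwap_qSwap_and u v a b us zs).1 X

theorem qSwap_invol_and (z1 z2 : var) (zs : varsort) :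
    (∀ X : QTerm var varsort index bindex opsym,
      qSwap z1 z2 zs (qSwap z1 z2 zs X) = X) ∧
    (∀ A : QAbs var varsort index bindex opsym,
      qSwapAbs z1 z2 zs (qSwapAbs z1 z2 zs A) = A) := by
  apply QTerm.my_induction
  · intro xs x; simp only [qSwap_qVar]; rw [swapVarS_invol]
  · intro d inp binp hi hb
    simp only [qSwap_qOp]
    congr 1
    · funext i; cases h : inp i with
      | none => rfl
      | some X => simp [hi i X h]
    · funext j; cases h : binp j with
      | none => rfl
      | some A => simp [hb j A h]
  · intro xs x X hX
    simp only [qSwapAbs_qAbs]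
    rw [swapVarS_invol, hX]

theorem qSwap_invol (z1 z2 : var) (zs : varsort)
    (X : QTerm var varsort index bindex opsym) :
    qSwap z1 z2 zs (qSwap z1 z2 zs X) = X :=
  (qSwap_invol_and z1 z2 zs).1 X

theorem qSwapAbs_invol (z1 z2 : var) (zs : varsort)
    (A : QAbs var varsort index bindex opsym) :
    qSwapAbs z1 z2 zs (qSwapAbs z1 z2 zs A) = A :=
  (qSwap_invol_and z1 z2 zs).2 A

theorem qSwap_same (z : var) (zs : varsort)
    (X : QTerm var varsort index bindex opsym) : qSwap z z zs X = X :=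
  (qSwap_same_and z zs).1 X

end Dev
section Dev2
variable {var varsort index bindex opsym : Type u}

/-- Ordinal size of a quasiterm. -/
noncomputable def qSize : QTerm var varsort index bindex opsym → Ordinal.{u} :=
  QTerm.rec (motive_1 := fun _ => Ordinal.{u}) (motive_2 := fun _ => Ordinal.{u})
    (motive_3 := fun _ => Ordinal.{u}) (motive_4 := fun _ => Ordinal.{u})
    (fun _ _ => 0)
    (fun _ _ _ rinp rbinp => (⨆ i, rinp i) + ((⨆ j, rbinp j) + 1))
    (fun _ _ _ rX => rX + 1)
    0 (fun _ r => r + 1) 0 (fun _ r => r + 1)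

/-- Ordinal size of a quasiabstraction. -/
noncomputable def qSizeAbs : QAbs var varsort index bindex opsym → Ordinal.{u}
  | .qAbs _ _ X => qSize X + 1

noncomputable def osize (o : Option (QTerm var varsort index bindex opsym)) : Ordinal.{u} :=
  o.elim 0 (fun X => qSize X + 1)

noncomputable def osizeA (o : Option (QAbs var varsort index bindex opsym)) : Ordinal.{u} :=
  o.elim 0 (fun A => qSizeAbs A + 1)

theorem qSize_qOp (d : opsym) (inp : Input index (QTerm var varsort index bindex opsym))
    (binp : Input bindex (QAbs var varsort index bindex opsym)) :
    qSize (QTerm.qOp d inp binp)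
      = (⨆ i, osize (inp i)) + ((⨆ j, osizeA (binp j)) + 1) := by
  exact congrArg₂ (· + ·)
    (iSup_congr fun i => by cases h : inp i <;> rfl)
    (congrArg (· + 1)
      (iSup_congr fun j => by
        cases h : binp j with
        | none => rfl
        | some A => cases A; rfl))

theorem qSizeAbs_qAbs (xs : varsort) (x : var) (X : QTerm var varsort index bindex opsym) :
    qSizeAbs (QAbs.qAbs xs x X) = qSize X + 1 := rfl

theorem qSize_lt_of_inp {d : opsym} {inp : Input index (QTerm var varsort index bindex opsym)}
    {binp : Input bindex (QAbs var varsort index bindex opsym)}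
    {i : index} {X : QTerm var varsort index bindex opsym} (h : inp i = some X) :
    qSize X < qSize (QTerm.qOp d inp binp) := by
  rw [qSize_qOp]
  have h1 : qSize X < osize (inp i) := by
    rw [h]; exact Order.lt_succ _ |>.trans_eq (Ordinal.add_one_eq_succ _).symm
  exact (h1.trans_le (le_ciSup (Ordinal.bddAbove_range (fun i => osize (inp i))) i)).trans_le
    le_self_add

theorem qSizeAbs_lt_of_binp {d : opsym} {inp : Input index (QTerm var varsort index bindex opsym)}
    {binp : Input bindex (QAbs var varsort index bindex opsym)}
    {j : bindex} {A : QAbs var varsort index bindex opsym} (h : binp j = some A) :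
    qSizeAbs A < qSize (QTerm.qOp d inp binp) := by
  rw [qSize_qOp]
  have h1 : qSizeAbs A < osizeA (binp j) := by
    rw [h]; exact Order.lt_succ _ |>.trans_eq (Ordinal.add_one_eq_succ _).symm
  have h2 : osizeA (binp j) ≤ ⨆ j, osizeA (binp j) :=
    le_ciSup (Ordinal.bddAbove_range (fun j => osizeA (binp j))) j
  refine (h1.trans_le h2).trans_le ?_
  exact le_self_add.trans le_add_self

theorem qSize_lt_qSizeAbs {xs : varsort} {x : var} {X : QTerm var varsort index bindex opsym} :
    qSize X < qSizeAbs (QAbs.qAbs xs x X) := by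
  rw [qSizeAbs_qAbs]
  exact Order.lt_succ _ |>.trans_eq (Ordinal.add_one_eq_succ _).symm

theorem qSize_qSwap_and (z1 z2 : var) (zs : varsort) :
    (∀ X : QTerm var varsort index bindex opsym, qSize (qSwap z1 z2 zs X) = qSize X) ∧
    (∀ A : QAbs var varsort index bindex opsym, qSizeAbs (qSwapAbs z1 z2 zs A) = qSizeAbs A) := by
  apply QTerm.my_induction
  · intro xs x; rfl
  · intro d inp binp hi hb
    rw [qSwap_qOp, qSize_qOp, qSize_qOp]
    refine congrArg₂ (· + ·) ?_ (congrArg (· + 1) ?_)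
    · exact iSup_congr fun i => by
        cases h : inp i with
        | none => rfl
        | some X => simp [osize, hi i X h]
    · exact iSup_congr fun j => by
        cases h : binp j with
        | none => rfl
        | some A => simp [osizeA, hb j A h]
  · intro xs x X hX
    rw [qSwapAbs_qAbs, qSizeAbs_qAbs, qSizeAbs_qAbs, hX]

theorem qSize_qSwap (z1 z2 : var) (zs : varsort) (X : QTerm var varsort index bindex opsym) :
    qSize (qSwap z1 z2 zs X) = qSize X := (qSize_qSwap_and z1 z2 zs).1 X

end Dev2
section Dev3
variable {var varsort index bindex opsym : Type u}

/-- Strong induction on size, simultaneously for quasiterms and quasiabstractions. -/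
theorem qsize_induction
    {P : QTerm var varsort index bindex opsym → Prop}
    {Q : QAbs var varsort index bindex opsym → Prop}
    (h : ∀ X, (∀ Y, qSize Y < qSize X → P Y) → (∀ B, qSizeAbs B < qSize X → Q B) → P X)
    (ha : ∀ A, (∀ Y, qSize Y < qSizeAbs A → P Y) →
      (∀ B, qSizeAbs B < qSizeAbs A → Q B) → Q A) :
    (∀ X, P X) ∧ (∀ A, Q A) := by
  have key : ∀ s : Ordinal, (∀ X, qSize X = s → P X) ∧ (∀ A, qSizeAbs A = s → Q A) := by
    intro s
    induction s using Ordinal.induction with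
    | h s IH =>
      constructor
      · intro X hX
        exact h X (fun Y hY => (IH _ (hX ▸ hY)).1 Y rfl)
          (fun B hB => (IH _ (hX ▸ hB)).2 B rfl)
      · intro A hA
        exact ha A (fun Y hY => (IH _ (hA ▸ hY)).1 Y rfl)
          (fun B hB => (IH _ (hA ▸ hB)).2 B rfl)
  exact ⟨fun X => (key (qSize X)).1 X rfl, fun A => (key (qSizeAbs A)).2 A rfl⟩

theorem qFresh_swap_and (z1 z2 : var) (zs : varsort) :
    (∀ X : QTerm var varsort index bindex opsym, ∀ ys y, QFresh ys y X →
      QFresh ys (swapVarS var varsort zs ys z1 z2 y) (qSwap z1 z2 zs X)) ∧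
    (∀ A : QAbs var varsort index bindex opsym, ∀ ys y, QFreshAbs ys y A →
      QFreshAbs ys (swapVarS var varsort zs ys z1 z2 y) (qSwapAbs z1 z2 zs A)) := by
  apply qsize_induction
  · intro X IH IHA ys y hf
    cases X with
    | qVar xs x =>
      cases hf with
      | qVar hne =>
        rw [qSwap_qVar]
        refine QFresh.qVar fun hEq => hne ?_
        obtain ⟨h1, h2⟩ := Prod.mk.injEq .. ▸ hEq
        subst h1
        exact Prod.ext rfl (swapVarS_inj h2)
    | qOp d inp binp =>
      cases hf with
      | qOp hi hb =>
        rw [qSwap_qOp]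
        refine QFresh.qOp ?_ ?_
        · intro i X' hX'
          rcases Option.map_eq_some_iff.1 hX' with ⟨Xi, hXi, rfl⟩
          exact IH Xi (qSize_lt_of_inp hXi) ys y (hi i Xi hXi)
        · intro j A' hA'
          rcases Option.map_eq_some_iff.1 hA' with ⟨Aj, hAj, rfl⟩
          exact IHA Aj (qSizeAbs_lt_of_binp hAj) ys y (hb j Aj hAj)
  · intro A IH IHA ys y hf
    cases A with
    | qAbs xs x X0 =>
      rw [qSwapAbs_qAbs]
      cases hf with
      | qAbs_bound => exact QFreshAbs.qAbs_bound
      | qAbs_body hbody =>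
        exact QFreshAbs.qAbs_body (IH X0 qSize_lt_qSizeAbs ys y hbody)

theorem qFresh_swap {z1 z2 : var} {zs : varsort}
    {X : QTerm var varsort index bindex opsym} {ys : varsort} {y : var}
    (h : QFresh ys y X) :
    QFresh ys (swapVarS var varsort zs ys z1 z2 y) (qSwap z1 z2 zs X) :=
  (qFresh_swap_and z1 z2 zs).1 X ys y h

theorem qFreshAbs_swap {z1 z2 : var} {zs : varsort}
    {A : QAbs var varsort index bindex opsym} {ys : varsort} {y : var}
    (h : QFreshAbs ys y A) :
    QFreshAbs ys (swapVarS var varsort zs ys z1 z2 y) (qSwapAbs z1 z2 zs A) :=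
  (qFresh_swap_and z1 z2 zs).2 A ys y h

theorem qFresh_swap_iff {z1 z2 : var} {zs : varsort}
    {X : QTerm var varsort index bindex opsym} {ys : varsort} {y : var} :
    QFresh ys (swapVarS var varsort zs ys z1 z2 y) (qSwap z1 z2 zs X) ↔ QFresh ys y X := by
  constructor
  · intro h
    have := qFresh_swap (z1 := z1) (z2 := z2) (zs := zs) h
    rwa [swapVarS_invol, qSwap_invol] at this
  · exact qFresh_swap

theorem qFresh_swap_iff' {z1 z2 : var} {zs : varsort}
    {X : QTerm var varsort index bindex opsym} {ys : varsort} {y : var} :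
    QFresh ys y (qSwap z1 z2 zs X) ↔ QFresh ys (swapVarS var varsort zs ys z1 z2 y) X := by
  rw [← qFresh_swap_iff (z1 := z1) (z2 := z2) (zs := zs)
    (X := X) (y := swapVarS var varsort zs ys z1 z2 y), swapVarS_invol]

theorem idom_map {α β : Type u} (inp : Input α β) (f : β → β) :
    idom (fun a => (inp a).map f) = idom inp := by
  ext a; simp [idom, Option.map_eq_none_iff]

theorem qGood_swap_and (z1 z2 : var) (zs : varsort) :
    (∀ X : QTerm var varsort index bindex opsym, QGood X → QGood (qSwap z1 z2 zs X)) ∧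
    (∀ A : QAbs var varsort index bindex opsym, QGoodAbs A → QGoodAbs (qSwapAbs z1 z2 zs A)) := by
  apply qsize_induction
  · intro X IH IHA hg
    cases X with
    | qVar xs x => exact QGood.qVar
    | qOp d inp binp =>
      cases hg with
      | qOp hi hb hsi hsb =>
        rw [qSwap_qOp]
        refine QGood.qOp ?_ ?_ ?_ ?_
        · intro i X' hX'
          rcases Option.map_eq_some_iff.1 hX' with ⟨Xi, hXi, rfl⟩
          exact IH Xi (qSize_lt_of_inp hXi) (hi i Xi hXi)
        · intro j A' hA'
          rcases Option.map_eq_some_iff.1 hA' with ⟨Aj, hAj, rfl⟩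
          exact IHA Aj (qSizeAbs_lt_of_binp hAj) (hb j Aj hAj)
        · rwa [smallDom, idom_map]
        · rwa [smallDom, idom_map]
  · intro A IH IHA hg
    cases A with
    | qAbs xs x X0 =>
      cases hg with
      | qAbs h0 =>
        rw [qSwapAbs_qAbs]
        exact QGoodAbs.qAbs (IH X0 qSize_lt_qSizeAbs h0)

theorem qGood_swap {z1 z2 : var} {zs : varsort}
    {X : QTerm var varsort index bindex opsym} (h : QGood X) :
    QGood (qSwap z1 z2 zs X) := (qGood_swap_and z1 z2 zs).1 X h

theorem qGood_swap_iff {z1 z2 : var} {zs : varsort}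
    {X : QTerm var varsort index bindex opsym} :
    QGood (qSwap z1 z2 zs X) ↔ QGood X := by
  constructor
  · intro h
    have := qGood_swap (z1 := z1) (z2 := z2) (zs := zs) h
    rwa [qSwap_invol] at this
  · exact qGood_swap

end Dev3
section Dev4
variable {var varsort index bindex opsym : Type u}

theorem alpha_symm_and :
    (∀ X : QTerm var varsort index bindex opsym, ∀ X', Alpha X X' → Alpha X' X) ∧
    (∀ A : QAbs var varsort index bindex opsym, ∀ A', AlphaAbs A A' → AlphaAbs A' A) := by
  apply qsize_induction
  · intro X IH IHA X' h
    cases h with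
    | qVar => exact Alpha.qVar
    | qOp hdom hc hbdom hbc =>
      refine Alpha.qOp (fun i => (hdom i).symm) ?_ (fun j => (hbdom j).symm) ?_
      · intro i Y Y' h1 h2
        exact IH Y' (qSize_lt_of_inp h2) Y (hc i Y' Y h2 h1)
      · intro j B B' h1 h2
        exact IHA B' (qSizeAbs_lt_of_binp h2) B (hbc j B' B h2 h1)
  · intro A IH IHA A' h
    cases h with
    | qAbs hy hf hf' ha =>
      rename_i xs x x' X X' y
      refine AlphaAbs.qAbs (y := y) ?_ hf' hf ?_
      · intro hmem
        apply hy
        rcases hmem with h | h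
        · exact Or.inr h
        · exact Or.inl h
      · exact IH (qSwap y x xs X) (by rw [qSize_qSwap]; exact qSize_lt_qSizeAbs) _ ha

theorem alpha_symm {X X' : QTerm var varsort index bindex opsym} (h : Alpha X X') :
    Alpha X' X := alpha_symm_and.1 X X' h

theorem alphaAbs_symm {A A' : QAbs var varsort index bindex opsym} (h : AlphaAbs A A') :
    AlphaAbs A' A := alpha_symm_and.2 A A' h

theorem alpha_swap_and :
    (∀ X : QTerm var varsort index bindex opsym, ∀ X' z1 z2 zs, Alpha X X' →
      Alpha (qSwap z1 z2 zs X) (qSwap z1 z2 zs X')) ∧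
    (∀ A : QAbs var varsort index bindex opsym, ∀ A' z1 z2 zs, AlphaAbs A A' →
      AlphaAbs (qSwapAbs z1 z2 zs A) (qSwapAbs z1 z2 zs A')) := by
  apply qsize_induction
  · intro X IH IHA X' z1 z2 zs h
    cases h with
    | qVar => exact Alpha.qVar
    | qOp hdom hc hbdom hbc =>
      rw [qSwap_qOp, qSwap_qOp]
      refine Alpha.qOp ?_ ?_ ?_ ?_
      · intro i; simp only [Option.map_eq_none_iff]; exact hdom i
      · intro i Y Y' h1 h2
        rcases Option.map_eq_some_iff.1 h1 with ⟨Xi, hXi, rfl⟩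
        rcases Option.map_eq_some_iff.1 h2 with ⟨Xi', hXi', rfl⟩
        exact IH Xi (qSize_lt_of_inp hXi) Xi' z1 z2 zs (hc i Xi Xi' hXi hXi')
      · intro j; simp only [Option.map_eq_none_iff]; exact hbdom j
      · intro j B B' h1 h2
        rcases Option.map_eq_some_iff.1 h1 with ⟨Aj, hAj, rfl⟩
        rcases Option.map_eq_some_iff.1 h2 with ⟨Aj', hAj', rfl⟩
        exact IHA Aj (qSizeAbs_lt_of_binp hAj) Aj' z1 z2 zs (hbc j Aj Aj' hAj hAj')
  · intro A IH IHA A' z1 z2 zs h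
    cases h with
    | qAbs hy hf hf' ha =>
      rename_i xs x x' X X' y
      rw [qSwapAbs_qAbs, qSwapAbs_qAbs]
      refine AlphaAbs.qAbs (y := swapVarS var varsort zs xs z1 z2 y) ?_
        (qFresh_swap hf) (qFresh_swap hf') ?_
      · intro hmem
        apply hy
        rcases hmem with h | h
        · exact Or.inl (swapVarS_inj h)
        · exact Or.inr (swapVarS_inj h)
      · have h2 := IH (qSwap y x xs X) (by rw [qSize_qSwap]; exact qSize_lt_qSizeAbs)
          (qSwap y x' xs X') z1 z2 zs ha
        have e1 := qSwap_qSwap z1 z2 y x zs xs X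
        have e2 := qSwap_qSwap z1 z2 y x' zs xs X'
        rw [e1, e2] at h2
        exact h2

theorem alpha_swap {X X' : QTerm var varsort index bindex opsym} {z1 z2 : var} {zs : varsort}
    (h : Alpha X X') : Alpha (qSwap z1 z2 zs X) (qSwap z1 z2 zs X') :=
  alpha_swap_and.1 X X' z1 z2 zs h

theorem alpha_fresh_and :
    (∀ X : QTerm var varsort index bindex opsym, ∀ X' ys y, Alpha X X' →
      QFresh ys y X → QFresh ys y X') ∧
    (∀ A : QAbs var varsort index bindex opsym, ∀ A' ys y, AlphaAbs A A' →
      QFreshAbs ys y A → QFreshAbs ys y A') := by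
  apply qsize_induction
  · intro X IH IHA X' ys y h hf
    cases h with
    | qVar => exact hf
    | qOp hdom hc hbdom hbc =>
      rename_i d inp binp inp' binp'
      cases hf with
      | qOp hfi hfb =>
        refine QFresh.qOp ?_ ?_
        · intro i Xi' hXi'
          have hne : inp i ≠ none := fun hn => by
            rw [hdom i, hXi'] at hn; exact Option.some_ne_none _ hn
          rcases Option.ne_none_iff_exists'.1 hne with ⟨Xi, hXi⟩
          exact IH Xi (qSize_lt_of_inp hXi) Xi' ys y (hc i Xi Xi' hXi hXi') (hfi i Xi hXi)
        · intro j Aj' hAj'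
          have hne : binp j ≠ none := fun hn => by
            rw [hbdom j, hAj'] at hn; exact Option.some_ne_none _ hn
          rcases Option.ne_none_iff_exists'.1 hne with ⟨Aj, hAj⟩
          exact IHA Aj (qSizeAbs_lt_of_binp hAj) Aj' ys y (hbc j Aj Aj' hAj hAj') (hfb j Aj hAj)
  · intro A IH IHA A' ys y h hf
    cases h with
    | qAbs hy0 hf0 hf0' ha =>
      rename_i xs x x' X X' y0
      have hltX : qSize (qSwap y0 x xs X) < qSizeAbs (QAbs.qAbs xs x X) := by
        rw [qSize_qSwap]; exact qSize_lt_qSizeAbs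
      have hy0x : y0 ≠ x := fun h => hy0 (Or.inl h)
      have hy0x' : y0 ≠ x' := fun h => hy0 (Or.inr h)
      have key : ∀ ys₁ y₁, QFresh ys₁ y₁ (qSwap y0 x xs X) →
          QFresh ys₁ y₁ (qSwap y0 x' xs X') :=
        fun ys₁ y₁ hh => IH (qSwap y0 x xs X) hltX _ ys₁ y₁ ha hh
      have xcase : x = x' ∨ QFresh xs x X' := by
        by_cases hxx' : x = x'
        · exact Or.inl hxx'
        · right
          have h1 : QFresh xs x (qSwap y0 x xs X) := by
            rw [qFresh_swap_iff' (z1 := y0) (z2 := x) (zs := xs)]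
            rwa [swapVarS_sort_eq, swapVar_right]
          have h2 := key _ _ h1
          rw [qFresh_swap_iff' (z1 := y0) (z2 := x') (zs := xs)] at h2
          rwa [swapVarS_sort_eq, swapVar_of_ne (Ne.symm hy0x) hxx'] at h2
      cases hf with
      | qAbs_bound =>
        rcases xcase with h | h
        · rw [h]; exact QFreshAbs.qAbs_bound
        · exact QFreshAbs.qAbs_body h
      | qAbs_body hb =>
        by_cases hc1 : (ys, y) = (xs, x')
        · obtain ⟨e1, e2⟩ := Prod.mk.injEq .. ▸ hc1
          subst e1; subst e2
          exact QFreshAbs.qAbs_bound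
        by_cases hc2 : (ys, y) = (xs, y0)
        · obtain ⟨e1, e2⟩ := Prod.mk.injEq .. ▸ hc2
          subst e1; subst e2
          exact QFreshAbs.qAbs_body hf0'
        by_cases hc3 : (ys, y) = (xs, x)
        · obtain ⟨e1, e2⟩ := Prod.mk.injEq .. ▸ hc3
          subst e1; subst e2
          rcases xcase with h | h
          · exact (hc1 (by rw [h])).elim
          · exact QFreshAbs.qAbs_body h
        · have h1 : QFresh ys y (qSwap y0 x xs X) := by
            rw [qFresh_swap_iff' (z1 := y0) (z2 := x) (zs := xs)]
            rwa [swapVarS_of_ne (fun hh => hc2 hh.symm) (fun hh => hc3 hh.symm)]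
          have h2 := key _ _ h1
          rw [qFresh_swap_iff' (z1 := y0) (z2 := x') (zs := xs)] at h2
          rw [swapVarS_of_ne (fun hh => hc2 hh.symm) (fun hh => hc1 hh.symm)] at h2
          exact QFreshAbs.qAbs_body h2

theorem alpha_fresh {X X' : QTerm var varsort index bindex opsym} {ys : varsort} {y : var}
    (h : Alpha X X') : QFresh ys y X → QFresh ys y X' := alpha_fresh_and.1 X X' ys y h

theorem alpha_fresh_iff {X X' : QTerm var varsort index bindex opsym} {ys : varsort} {y : var}
    (h : Alpha X X') : QFresh ys y X ↔ QFresh ys y X' :=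
  ⟨alpha_fresh h, alpha_fresh (alpha_symm h)⟩

end Dev4
section Dev5
variable {var varsort index bindex opsym : Type u}

theorem idom_congr {α β : Type u} {inp inp' : Input α β}
    (h : ∀ a, inp a = none ↔ inp' a = none) : idom inp = idom inp' := by
  ext a; simp only [idom, Set.mem_setOf_eq, ne_eq]
  exact not_congr (h a)

theorem alpha_good_and :
    (∀ X : QTerm var varsort index bindex opsym, ∀ X', Alpha X X' → QGood X → QGood X') ∧
    (∀ A : QAbs var varsort index bindex opsym, ∀ A', AlphaAbs A A' → QGoodAbs A → QGoodAbs A') := by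
  apply qsize_induction
  · intro X IH IHA X' h hg
    cases h with
    | qVar => exact hg
    | qOp hdom hc hbdom hbc =>
      rename_i d inp binp inp' binp'
      cases hg with
      | qOp hi hb hsi hsb =>
        refine QGood.qOp ?_ ?_ ?_ ?_
        · intro i Xi' hXi'
          have hne : inp i ≠ none := fun hn => by
            rw [hdom i, hXi'] at hn; exact Option.some_ne_none _ hn
          rcases Option.ne_none_iff_exists'.1 hne with ⟨Xi, hXi⟩
          exact IH Xi (qSize_lt_of_inp hXi) Xi' (hc i Xi Xi' hXi hXi') (hi i Xi hXi)
        · intro j Aj' hAj'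
          have hne : binp j ≠ none := fun hn => by
            rw [hbdom j, hAj'] at hn; exact Option.some_ne_none _ hn
          rcases Option.ne_none_iff_exists'.1 hne with ⟨Aj, hAj⟩
          exact IHA Aj (qSizeAbs_lt_of_binp hAj) Aj' (hbc j Aj Aj' hAj hAj') (hb j Aj hAj)
        · rwa [smallDom, ← idom_congr hdom]
        · rwa [smallDom, ← idom_congr hbdom]
  · intro A IH IHA A' h hg
    cases h with
    | qAbs hy0 hf0 hf0' ha =>
      rename_i xs x x' X X' y0
      cases hg with
      | qAbs h0 =>
        refine QGoodAbs.qAbs ?_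
        have h1 : QGood (qSwap y0 x xs X) := qGood_swap h0
        have h2 := IH (qSwap y0 x xs X)
          (by rw [qSize_qSwap]; exact qSize_lt_qSizeAbs) _ ha h1
        exact qGood_swap_iff.1 h2

theorem alpha_good {X X' : QTerm var varsort index bindex opsym}
    (h : Alpha X X') : QGood X → QGood X' := alpha_good_and.1 X X' h

theorem alpha_good_iff {X X' : QTerm var varsort index bindex opsym}
    (h : Alpha X X') : QGood X ↔ QGood X' :=
  ⟨alpha_good h, alpha_good (alpha_symm h)⟩

/-- The set of variables of a given sort that are not fresh. -/
def NFset (ys : varsort) (X : QTerm var varsort index bindex opsym) : Set var :=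
  {y | ¬ QFresh ys y X}

def NFab (ys : varsort) (A : QAbs var varsort index bindex opsym) : Set var :=
  {y | ¬ QFreshAbs ys y A}

theorem nf_small_and (hinf : Cardinal.aleph0 ≤ Cardinal.mk var)
    (hreg : (Cardinal.mk var).IsRegular) :
    (∀ X : QTerm var varsort index bindex opsym, QGood X → ∀ ys,
      Cardinal.mk (NFset ys X) < Cardinal.mk var) ∧
    (∀ A : QAbs var varsort index bindex opsym, QGoodAbs A → ∀ ys,
      Cardinal.mk (NFab ys A) < Cardinal.mk var) := by
  apply qsize_induction
  · intro X IH IHA hg ys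
    cases X with
    | qVar xs x =>
      have hsub : NFset ys (QTerm.qVar xs x : QTerm var varsort index bindex opsym) ⊆ {x} := by
        intro y hy
        by_contra hne
        exact hy (QFresh.qVar (fun hEq => hne (by
          obtain ⟨e1, e2⟩ := Prod.mk.injEq .. ▸ hEq
          simp [e2])))
      calc Cardinal.mk (NFset ys (QTerm.qVar xs x : QTerm var varsort index bindex opsym))
          ≤ Cardinal.mk ({x} : Set var) := Cardinal.mk_le_mk_of_subset hsub
        _ = 1 := Cardinal.mk_singleton x
        _ < Cardinal.aleph0 := Cardinal.one_lt_aleph0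
        _ ≤ Cardinal.mk var := hinf
    | qOp d inp binp =>
      cases hg with
      | qOp hi hb hsi hsb =>
        set f : ↥(idom inp) → Set var :=
          fun i => {y | ∃ Z, inp i.1 = some Z ∧ ¬ QFresh ys y Z} with hf
        set g : ↥(idom binp) → Set var :=
          fun j => {y | ∃ B, binp j.1 = some B ∧ ¬ QFreshAbs ys y B} with hg'
        have hsub : NFset ys (QTerm.qOp d inp binp) ⊆ (⋃ i, f i) ∪ (⋃ j, g j) := by
          intro y hy
          by_contra hmem
          simp only [Set.mem_union, Set.mem_iUnion, not_or, not_exists] at hmem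
          apply hy
          refine QFresh.qOp ?_ ?_
          · intro i Z hZ
            by_contra hnf
            exact hmem.1 ⟨i, by simp [idom, hZ]⟩ (by exact ⟨Z, hZ, hnf⟩)
          · intro j B hB
            by_contra hnf
            exact hmem.2 ⟨j, by simp [idom, hB]⟩ (by exact ⟨B, hB, hnf⟩)
        have hUi : Cardinal.mk ↥(⋃ i, f i) < Cardinal.mk var := by
          refine lt_of_le_of_lt Cardinal.mk_iUnion_le_sum_mk ?_
          refine Cardinal.sum_lt_of_isRegular hreg hsi ?_
          intro i
          rcases Option.ne_none_iff_exists'.1 i.2 with ⟨Z, hZ⟩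
          have : f i ⊆ NFset ys Z := by
            rintro y ⟨Z', hZ', hnf⟩
            rw [hZ] at hZ'
            exact (Option.some.inj hZ') ▸ hnf
          exact lt_of_le_of_lt (Cardinal.mk_le_mk_of_subset this)
            (IH Z (qSize_lt_of_inp hZ) (hi i.1 Z hZ) ys)
        have hUj : Cardinal.mk ↥(⋃ j, g j) < Cardinal.mk var := by
          refine lt_of_le_of_lt Cardinal.mk_iUnion_le_sum_mk ?_
          refine Cardinal.sum_lt_of_isRegular hreg hsb ?_
          intro j
          rcases Option.ne_none_iff_exists'.1 j.2 with ⟨B, hB⟩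
          have : g j ⊆ NFab ys B := by
            rintro y ⟨B', hB', hnf⟩
            rw [hB] at hB'
            exact (Option.some.inj hB') ▸ hnf
          exact lt_of_le_of_lt (Cardinal.mk_le_mk_of_subset this)
            (IHA B (qSizeAbs_lt_of_binp hB) (hb j.1 B hB) ys)
        refine lt_of_le_of_lt (Cardinal.mk_le_mk_of_subset hsub) ?_
        exact lt_of_le_of_lt (Cardinal.mk_union_le _ _)
          (Cardinal.add_lt_of_lt hinf hUi hUj)
  · intro A IH IHA hg ys
    cases A with
    | qAbs xs x X =>
      cases hg with
      | qAbs h0 =>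
        have hsub : NFab ys (QAbs.qAbs xs x X) ⊆ NFset ys X := by
          intro y hy
          by_contra hnf
          exact hy (QFreshAbs.qAbs_body (not_not.1 hnf))
        exact lt_of_le_of_lt (Cardinal.mk_le_mk_of_subset hsub)
          (IH X qSize_lt_qSizeAbs h0 ys)

theorem exists_not_mem_of_small {S : Set var}
    (h : Cardinal.mk S < Cardinal.mk var) : ∃ y, y ∉ S := by
  rw [← Set.ne_univ_iff_exists_notMem]
  intro hEq
  rw [hEq, Cardinal.mk_univ] at h
  exact lt_irrefl _ h

/-- Existence of a variable fresh for finitely many good terms/abstractions and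
avoiding finitely many variables. -/
theorem exists_fresh (hinf : Cardinal.aleph0 ≤ Cardinal.mk var)
    (hreg : (Cardinal.mk var).IsRegular) (ys : varsort)
    (L : List (QTerm var varsort index bindex opsym)) (hL : ∀ X ∈ L, QGood X)
    (avoid : List var) :
    ∃ y, y ∉ avoid ∧ ∀ X ∈ L, QFresh ys y X := by
  have hsmall : ∀ M : List (QTerm var varsort index bindex opsym), (∀ X ∈ M, QGood X) →
      Cardinal.mk ({y | ∃ X ∈ M, ¬ QFresh ys y X} : Set var) < Cardinal.mk var := by
    intro M
    induction M with
    | nil =>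
      intro _
      refine lt_of_le_of_lt (Cardinal.mk_le_mk_of_subset (s := _) (t := (∅ : Set var))
        (by rintro y ⟨X, hX, _⟩; exact absurd hX List.not_mem_nil)) ?_
      simp only [Cardinal.mk_emptyCollection]
      exact lt_of_lt_of_le Cardinal.aleph0_pos hinf
    | cons hd tl ih =>
      intro hM
      have h1 : ({y | ∃ X ∈ hd :: tl, ¬ QFresh ys y X} : Set var)
          ⊆ NFset ys hd ∪ {y | ∃ X ∈ tl, ¬ QFresh ys y X} := by
        rintro y ⟨X, hX, hnf⟩
        rcases List.mem_cons.1 hX with rfl | hX'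
        · exact Or.inl hnf
        · exact Or.inr ⟨X, hX', hnf⟩
      refine lt_of_le_of_lt (Cardinal.mk_le_mk_of_subset h1) ?_
      refine lt_of_le_of_lt (Cardinal.mk_union_le _ _) (Cardinal.add_lt_of_lt hinf ?_ ?_)
      · exact (nf_small_and hinf hreg).1 hd (hM hd List.mem_cons_self) ys
      · exact ih (fun X hX => hM X (List.mem_cons_of_mem hd hX))
  have havoid : Cardinal.mk ({y | y ∈ avoid} : Set var) < Cardinal.mk var :=
    lt_of_lt_of_le (List.finite_toSet avoid).lt_aleph0 hinf
  have := Cardinal.add_lt_of_lt hinf (hsmall L hL) havoid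
  have hbig : Cardinal.mk (({y | ∃ X ∈ L, ¬ QFresh ys y X} ∪ {y | y ∈ avoid} : Set var))
      < Cardinal.mk var :=
    lt_of_le_of_lt (Cardinal.mk_union_le _ _) this
  rcases exists_not_mem_of_small hbig with ⟨y, hy⟩
  refine ⟨y, fun hmem => hy (Or.inr hmem), fun X hX => ?_⟩
  by_contra hnf
  exact hy (Or.inl ⟨X, hX, hnf⟩)

end Dev5
section Dev6
variable {var varsort index bindex opsym : Type u}

theorem qSwap_comm_and (z1 z2 : var) (zs : varsort) :
    (∀ X : QTerm var varsort index bindex opsym, qSwap z1 z2 zs X = qSwap z2 z1 zs X) ∧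
    (∀ A : QAbs var varsort index bindex opsym, qSwapAbs z1 z2 zs A = qSwapAbs z2 z1 zs A) := by
  apply QTerm.my_induction
  · intro xs x; rw [qSwap_qVar, qSwap_qVar, swapVarS_comm]
  · intro d inp binp hi hb
    rw [qSwap_qOp, qSwap_qOp]
    congr 1
    · funext i; cases h : inp i with
      | none => rfl
      | some X => simp [hi i X h]
    · funext j; cases h : binp j with
      | none => rfl
      | some A => simp [hb j A h]
  · intro xs x X hX
    rw [qSwapAbs_qAbs, qSwapAbs_qAbs, swapVarS_comm, hX]

theorem qSwap_comm (z1 z2 : var) (zs : varsort) (X : QTerm var varsort index bindex opsym) :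
    qSwap z1 z2 zs X = qSwap z2 z1 zs X := (qSwap_comm_and z1 z2 zs).1 X

theorem alpha_size_and :
    (∀ X : QTerm var varsort index bindex opsym, ∀ X', Alpha X X' → qSize X = qSize X') ∧
    (∀ A : QAbs var varsort index bindex opsym, ∀ A', AlphaAbs A A' → qSizeAbs A = qSizeAbs A') := by
  apply qsize_induction
  · intro X IH IHA X' h
    cases h with
    | qVar => rfl
    | qOp hdom hc hbdom hbc =>
      rename_i d inp binp inp' binp'
      rw [qSize_qOp, qSize_qOp]
      refine congrArg₂ (· + ·) ?_ (congrArg (· + 1) ?_)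
      · refine iSup_congr fun i => ?_
        cases h1 : inp i with
        | none => rw [(hdom i).1 h1]
        | some Xi =>
          have hne : inp' i ≠ none := fun hn => by
            rw [← hdom i, h1] at hn; exact Option.some_ne_none _ hn
          rcases Option.ne_none_iff_exists'.1 hne with ⟨Xi', hXi'⟩
          rw [hXi']
          simp only [osize, Option.elim]
          rw [IH Xi (qSize_lt_of_inp h1) Xi' (hc i Xi Xi' h1 hXi')]
      · refine iSup_congr fun j => ?_
        cases h1 : binp j with
        | none => rw [(hbdom j).1 h1]
        | some Aj =>
          have hne : binp' j ≠ none := fun hn => by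
            rw [← hbdom j, h1] at hn; exact Option.some_ne_none _ hn
          rcases Option.ne_none_iff_exists'.1 hne with ⟨Aj', hAj'⟩
          rw [hAj']
          simp only [osizeA, Option.elim]
          rw [IHA Aj (qSizeAbs_lt_of_binp h1) Aj' (hbc j Aj Aj' h1 hAj')]
  · intro A IH IHA A' h
    cases h with
    | qAbs hy hf hf' ha =>
      rename_i xs x x' X X' y
      rw [qSizeAbs_qAbs, qSizeAbs_qAbs]
      have := IH (qSwap y x xs X) (by rw [qSize_qSwap]; exact qSize_lt_qSizeAbs) _ ha
      rw [qSize_qSwap, qSize_qSwap] at this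
      rw [this]

theorem alpha_size {X X' : QTerm var varsort index bindex opsym} (h : Alpha X X') :
    qSize X = qSize X' := alpha_size_and.1 X X' h

theorem alpha_refl_and (hinf : Cardinal.aleph0 ≤ Cardinal.mk var)
    (hreg : (Cardinal.mk var).IsRegular) :
    (∀ X : QTerm var varsort index bindex opsym, QGood X → Alpha X X) ∧
    (∀ A : QAbs var varsort index bindex opsym, QGoodAbs A → AlphaAbs A A) := by
  apply qsize_induction
  · intro X IH IHA hg
    cases X with
    | qVar xs x => exact Alpha.qVar
    | qOp d inp binp =>
      cases hg with
      | qOp hi hb hsi hsb =>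
        refine Alpha.qOp (fun i => Iff.rfl) ?_ (fun j => Iff.rfl) ?_
        · intro i Y Y' h1 h2
          rw [h1] at h2
          exact (Option.some.inj h2) ▸ IH Y (qSize_lt_of_inp h1) (hi i Y h1)
        · intro j B B' h1 h2
          rw [h1] at h2
          exact (Option.some.inj h2) ▸ IHA B (qSizeAbs_lt_of_binp h1) (hb j B h1)
  · intro A IH IHA hg
    cases A with
    | qAbs xs x X =>
      cases hg with
      | qAbs h0 =>
        rcases exists_fresh hinf hreg xs [X] (by simpa using h0) [x] with ⟨y, hy, hfr⟩
        refine AlphaAbs.qAbs (y := y) ?_ (hfr X (by simp)) (hfr X (by simp)) ?_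
        · intro hmem
          apply hy
          have : y = x := by
            rcases hmem with h | h
            · exact h
            · exact h
          simp [this]
        · exact IH (qSwap y x xs X) (by rw [qSize_qSwap]; exact qSize_lt_qSizeAbs)
            (qGood_swap h0)

theorem alpha_refl (hinf : Cardinal.aleph0 ≤ Cardinal.mk var)
    (hreg : (Cardinal.mk var).IsRegular)
    {X : QTerm var varsort index bindex opsym} (h : QGood X) : Alpha X X :=
  (alpha_refl_and hinf hreg).1 X h

/-- Congruence of abstraction formation. -/
theorem alphaAbs_cong (hinf : Cardinal.aleph0 ≤ Cardinal.mk var)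
    (hreg : (Cardinal.mk var).IsRegular)
    {X X' : QTerm var varsort index bindex opsym} (xs : varsort) (x : var)
    (hg : QGood X) (h : Alpha X X') :
    AlphaAbs (.qAbs xs x X) (.qAbs xs x X') := by
  rcases exists_fresh hinf hreg xs [X, X'] (by
    intro Z hZ
    rcases List.mem_cons.1 hZ with rfl | hZ'
    · exact hg
    · simp at hZ'
      exact hZ' ▸ alpha_good h hg) [x] with ⟨y, hy, hfr⟩
  refine AlphaAbs.qAbs (y := y) ?_ (hfr X (by simp)) (hfr X' (by simp)) ?_
  · intro hmem
    apply hy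
    have : y = x := by rcases hmem with h | h <;> exact h
    simp [this]
  · exact alpha_swap h

/-- Renaming the bound variable to a fresh one, given the fresh-swap property for the body. -/
theorem rename_lemma (hinf : Cardinal.aleph0 ≤ Cardinal.mk var)
    (hreg : (Cardinal.mk var).IsRegular)
    {X0 : QTerm var varsort index bindex opsym} {xs : varsort} {u x : var}
    (hg : QGood X0)
    (hF : ∀ a b zs', QFresh zs' a X0 → QFresh zs' b X0 → Alpha (qSwap a b zs' X0) X0)
    (hu : QFresh xs u X0) :
    AlphaAbs (.qAbs xs u (qSwap u x xs X0)) (.qAbs xs x X0) := by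
  by_cases hux : u = x
  · subst hux
    rw [qSwap_same]
    exact (alpha_refl_and hinf hreg).2 _ (QGoodAbs.qAbs hg)
  · rcases exists_fresh hinf hreg xs [X0, qSwap u x xs X0]
      (by
        intro Z hZ
        rcases List.mem_cons.1 hZ with rfl | hZ'
        · exact hg
        · simp at hZ'
          exact hZ' ▸ qGood_swap hg) [x, u] with ⟨w, hw, hfr⟩
    have hwx : w ≠ x := fun h => hw (by simp [h])
    have hwu : w ≠ u := fun h => hw (by simp [h])
    refine AlphaAbs.qAbs (y := w) ?_ (hfr _ (by simp)) (hfr _ (by simp)) ?_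
    · intro hmem
      simp only [Set.mem_insert_iff, Set.mem_singleton_iff] at hmem
      apply hw
      rcases hmem with h | h
      · simp [h]
      · simp [h]
    · have e : qSwap w u xs (qSwap u x xs X0) = qSwap w x xs (qSwap w u xs X0) := by
        rw [qSwap_qSwap]
        rw [swapVarS_sort_eq, swapVarS_sort_eq, swapVar_right,
          swapVar_of_ne (Ne.symm hwx) (Ne.symm hux)]
      rw [e]
      exact alpha_swap (hF w u xs (hfr _ (by simp)) hu)

/-- Some/any lemma, with explicit transitivity and fresh-swap hypotheses. -/
theorem some_any_lemma (hinf : Cardinal.aleph0 ≤ Cardinal.mk var)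
    (hreg : (Cardinal.mk var).IsRegular)
    {X X' : QTerm var varsort index bindex opsym} {xs : varsort} {u w x x' : var}
    (hgX : QGood X) (hgX' : QGood X')
    (hT : ∀ P Q R' : QTerm var varsort index bindex opsym, qSize P = qSize X → QGood P → Alpha P Q → Alpha Q R' → Alpha P R')
    (hFX : ∀ a b zs', QFresh zs' a X → QFresh zs' b X → Alpha (qSwap a b zs' X) X)
    (hFX' : ∀ a b zs', QFresh zs' a X' → QFresh zs' b X' → Alpha (qSwap a b zs' X') X')
    (hu : u ∉ ({x, x'} : Set var)) (hufX : QFresh xs u X) (hufX' : QFresh xs u X')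
    (ha : Alpha (qSwap u x xs X) (qSwap u x' xs X'))
    (hw : w ∉ ({x, x'} : Set var)) (hwfX : QFresh xs w X) (hwfX' : QFresh xs w X') :
    Alpha (qSwap w x xs X) (qSwap w x' xs X') := by
  by_cases hwu : w = u
  · subst hwu; exact ha
  have hux : u ≠ x := fun h => hu (Or.inl h)
  have hux' : u ≠ x' := fun h => hu (Or.inr h)
  have hwx : w ≠ x := fun h => hw (Or.inl h)
  have hwx' : w ≠ x' := fun h => hw (Or.inr h)
  have h1 : Alpha (qSwap w u xs (qSwap u x xs X)) (qSwap w u xs (qSwap u x' xs X')) :=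
    alpha_swap ha
  have e1 : qSwap w u xs (qSwap u x xs X) = qSwap w x xs (qSwap w u xs X) := by
    rw [qSwap_qSwap, swapVarS_sort_eq, swapVarS_sort_eq, swapVar_right,
      swapVar_of_ne (Ne.symm hwx) (Ne.symm hux)]
  have e2 : qSwap w u xs (qSwap u x' xs X') = qSwap w x' xs (qSwap w u xs X') := by
    rw [qSwap_qSwap, swapVarS_sort_eq, swapVarS_sort_eq, swapVar_right,
      swapVar_of_ne (Ne.symm hwx') (Ne.symm hux')]
  rw [e1, e2] at h1
  have h3 : Alpha (qSwap w x xs (qSwap w u xs X)) (qSwap w x xs X) :=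
    alpha_swap (hFX w u xs hwfX hufX)
  have h4 : Alpha (qSwap w x' xs (qSwap w u xs X')) (qSwap w x' xs X') :=
    alpha_swap (hFX' w u xs hwfX' hufX')
  have hsz : qSize (qSwap w x xs X) = qSize X := qSize_qSwap _ _ _ _
  have hg1 : QGood (qSwap w x xs X) := qGood_swap hgX
  refine hT _ _ _ hsz hg1 (alpha_symm h3) ?_
  refine hT _ _ _ (by rw [qSize_qSwap, qSize_qSwap]) (qGood_swap (qGood_swap hgX)) h1 h4

end Dev6
section Dev7
variable {var varsort index bindex opsym : Type u}

theorem grand_induction (hinf : Cardinal.aleph0 ≤ Cardinal.mk var)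
    (hreg : (Cardinal.mk var).IsRegular) : ∀ s : Ordinal.{u},
    (∀ X : QTerm var varsort index bindex opsym, qSize X = s → QGood X →
      ∀ z1 z2 zs, QFresh zs z1 X → QFresh zs z2 X → Alpha (qSwap z1 z2 zs X) X) ∧
    (∀ A : QAbs var varsort index bindex opsym, qSizeAbs A = s → QGoodAbs A →
      ∀ z1 z2 zs, QFreshAbs zs z1 A → QFreshAbs zs z2 A →
        AlphaAbs (qSwapAbs z1 z2 zs A) A) ∧
    (∀ X : QTerm var varsort index bindex opsym, qSize X = s → QGood X →
      ∀ Y Z, Alpha X Y → Alpha Y Z → Alpha X Z) ∧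
    (∀ A : QAbs var varsort index bindex opsym, qSizeAbs A = s → QGoodAbs A →
      ∀ B C, AlphaAbs A B → AlphaAbs B C → AlphaAbs A C) := by
  intro s
  induction s using Ordinal.induction with
  | h s IH =>
    refine ⟨?_, ?_, ?_, ?_⟩
    · -- F for terms
      intro X hs hg z1 z2 zs hf1 hf2
      cases X with
      | qVar xs x =>
        rw [qSwap_qVar]
        cases hf1 with
        | qVar hne1 =>
          cases hf2 with
          | qVar hne2 =>
            rw [swapVarS_of_ne hne1 hne2]
            exact Alpha.qVar
      | qOp d inp binp =>
        cases hg with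
        | qOp hi hb hsi hsb =>
          cases hf1 with
          | qOp hfi1 hfb1 =>
            cases hf2 with
            | qOp hfi2 hfb2 =>
              rw [qSwap_qOp]
              refine Alpha.qOp (fun i => by simp [Option.map_eq_none_iff]) ?_
                (fun j => by simp [Option.map_eq_none_iff]) ?_
              · intro i Y Y' h1 h2
                rcases Option.map_eq_some_iff.1 h1 with ⟨Xi, hXi, rfl⟩
                rw [hXi] at h2
                rw [← Option.some.inj h2]
                exact (IH _ (hs ▸ qSize_lt_of_inp hXi)).1 Xi rfl (hi i Xi hXi) z1 z2 zs
                  (hfi1 i Xi hXi) (hfi2 i Xi hXi)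
              · intro j B B' h1 h2
                rcases Option.map_eq_some_iff.1 h1 with ⟨Aj, hAj, rfl⟩
                rw [hAj] at h2
                rw [← Option.some.inj h2]
                exact (IH _ (hs ▸ qSizeAbs_lt_of_binp hAj)).2.1 Aj rfl (hb j Aj hAj) z1 z2 zs
                  (hfb1 j Aj hAj) (hfb2 j Aj hAj)
    · -- F for abstractions
      intro A hs hg z1 z2 zs hf1 hf2
      cases A with
      | qAbs xs x X0 =>
        cases hg with
        | qAbs hg0 =>
          have htlt : qSize X0 < s := hs ▸ qSize_lt_qSizeAbs
          have hF : ∀ a b zs', QFresh zs' a X0 → QFresh zs' b X0 →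
              Alpha (qSwap a b zs' X0) X0 :=
            fun a b zs' ha hb => (IH _ htlt).1 X0 rfl hg0 a b zs' ha hb
          rw [qSwapAbs_qAbs]
          by_cases hzx : zs = xs
          · subst hzx
            rw [swapVarS_sort_eq]
            by_cases h12 : z1 = z2
            · subst h12
              rw [qSwap_same, swapVar_same]
              exact (alpha_refl_and hinf hreg).2 _ (QGoodAbs.qAbs hg0)
            by_cases h1x : z1 = x
            · subst h1x
              rw [swapVar_left]
              have hz2f : QFresh zs z2 X0 := by
                cases hf2 with
                | qAbs_bound => exact absurd rfl h12
                | qAbs_body h => exact h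
              rw [qSwap_comm]
              exact rename_lemma hinf hreg hg0 hF hz2f
            by_cases h2x : z2 = x
            · subst h2x
              rw [swapVar_right]
              have hz1f : QFresh zs z1 X0 := by
                cases hf1 with
                | qAbs_bound => exact absurd rfl h1x
                | qAbs_body h => exact h
              exact rename_lemma hinf hreg hg0 hF hz1f
            · rw [swapVar_of_ne (Ne.symm h1x) (Ne.symm h2x)]
              have hz1f : QFresh zs z1 X0 := by
                cases hf1 with
                | qAbs_bound => exact absurd rfl h1x
                | qAbs_body h => exact h
              have hz2f : QFresh zs z2 X0 := by
                cases hf2 with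
                | qAbs_bound => exact absurd rfl h2x
                | qAbs_body h => exact h
              exact alphaAbs_cong hinf hreg zs x (qGood_swap hg0)
                (hF z1 z2 zs hz1f hz2f)
          · rw [swapVarS_sort_ne (fun h => hzx h.symm)]
            have hz1f : QFresh zs z1 X0 := by
              cases hf1 with
              | qAbs_bound => exact absurd rfl hzx
              | qAbs_body h => exact h
            have hz2f : QFresh zs z2 X0 := by
              cases hf2 with
              | qAbs_bound => exact absurd rfl hzx
              | qAbs_body h => exact h
            exact alphaAbs_cong hinf hreg xs x (qGood_swap hg0)
              (hF z1 z2 zs hz1f hz2f)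
    · -- T for terms
      intro X hs hg Y Z hXY hYZ
      cases hXY with
      | qVar => exact hYZ
      | qOp hdom hc hbdom hbc =>
        rename_i d inp binp inp' binp'
        cases hYZ with
        | qOp hdom' hc' hbdom' hbc' =>
          rename_i inp'' binp''
          cases hg with
          | qOp hi hb hsi hsb =>
            refine Alpha.qOp (fun i => (hdom i).trans (hdom' i)) ?_
              (fun j => (hbdom j).trans (hbdom' j)) ?_
            · intro i Xi Zi h1 h3
              have hne : inp' i ≠ none := fun hn => by
                rw [← hdom i, h1] at hn; exact Option.some_ne_none _ hn
              rcases Option.ne_none_iff_exists'.1 hne with ⟨Yi, hYi⟩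
              exact (IH _ (hs ▸ qSize_lt_of_inp h1)).2.2.1 Xi rfl (hi i Xi h1) Yi Zi
                (hc i Xi Yi h1 hYi) (hc' i Yi Zi hYi h3)
            · intro j Aj Cj h1 h3
              have hne : binp' j ≠ none := fun hn => by
                rw [← hbdom j, h1] at hn; exact Option.some_ne_none _ hn
              rcases Option.ne_none_iff_exists'.1 hne with ⟨Bj, hBj⟩
              exact (IH _ (hs ▸ qSizeAbs_lt_of_binp h1)).2.2.2 Aj rfl (hb j Aj h1) Bj Cj
                (hbc j Aj Bj h1 hBj) (hbc' j Bj Cj hBj h3)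
    · -- T for abstractions
      intro A hs hg B C hAB hBC
      cases hAB with
      | qAbs hu huf huf' ha1 =>
        rename_i xs x x' X X' u
        cases hBC with
        | qAbs hv hvf hvf' ha2 =>
          rename_i x'' X'' v
          cases hg with
          | qAbs hgX =>
            have htlt : qSize X < s := hs ▸ qSize_lt_qSizeAbs
            have hgX' : QGood X' := by
              have := alpha_good ha1 (qGood_swap hgX)
              exact qGood_swap_iff.1 this
            have hgX'' : QGood X'' := by
              have := alpha_good ha2 (qGood_swap hgX')
              exact qGood_swap_iff.1 this
            have hszX' : qSize X' = qSize X := by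
              have := alpha_size ha1
              rwa [qSize_qSwap, qSize_qSwap, eq_comm] at this
            have hszX'' : qSize X'' = qSize X := by
              have := alpha_size ha2
              rw [qSize_qSwap, qSize_qSwap] at this
              rw [← this, hszX']
            rcases exists_fresh hinf hreg xs [X, X', X''] (by
              intro Z hZ
              simp only [List.mem_cons, List.mem_singleton, List.not_mem_nil, or_false] at hZ
              rcases hZ with rfl | rfl | rfl
              · exact hgX
              · exact hgX'
              · exact hgX'') [x, x', x'', u, v] with ⟨w, hwav, hwfr⟩
            have hwx : w ≠ x := fun h => hwav (by simp [h])
            have hwx' : w ≠ x' := fun h => hwav (by simp [h])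
            have hwx'' : w ≠ x'' := fun h => hwav (by simp [h])
            have hwfX : QFresh xs w X := hwfr X (by simp)
            have hwfX' : QFresh xs w X' := hwfr X' (by simp)
            have hwfX'' : QFresh xs w X'' := hwfr X'' (by simp)
            have hT : ∀ P Q R' : QTerm var varsort index bindex opsym,
                qSize P = qSize X → QGood P → Alpha P Q → Alpha Q R' → Alpha P R' :=
              fun P Q R' hsz hgp => (IH _ (hsz ▸ htlt)).2.2.1 P rfl hgp Q R'
            have hT' : ∀ P Q R' : QTerm var varsort index bindex opsym,
                qSize P = qSize X' → QGood P → Alpha P Q → Alpha Q R' → Alpha P R' :=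
              fun P Q R' hsz hgp => hT P Q R' (hsz.trans hszX') hgp
            have hFX := fun a b zs' => (IH _ htlt).1 X rfl hgX a b zs'
            have hFX' := fun a b zs' =>
              (IH _ (hszX' ▸ htlt : qSize X' < s)).1 X' rfl hgX' a b zs'
            have hFX'' := fun a b zs' =>
              (IH _ (hszX'' ▸ htlt : qSize X'' < s)).1 X'' rfl hgX'' a b zs'
            have sa1 : Alpha (qSwap w x xs X) (qSwap w x' xs X') :=
              some_any_lemma hinf hreg hgX hgX' hT hFX hFX' hu huf huf' ha1
                (by
                  intro hmem
                  rcases hmem with h | h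
                  · exact hwx h
                  · exact hwx' h) hwfX hwfX'
            have sa2 : Alpha (qSwap w x' xs X') (qSwap w x'' xs X'') :=
              some_any_lemma hinf hreg hgX' hgX'' hT' hFX' hFX'' hv hvf hvf' ha2
                (by
                  intro hmem
                  rcases hmem with h | h
                  · exact hwx' h
                  · exact hwx'' h) hwfX' hwfX''
            refine AlphaAbs.qAbs (y := w) ?_ hwfX hwfX'' ?_
            · intro hmem
              rcases hmem with h | h
              · exact hwx h
              · exact hwx'' h
            · exact hT _ _ _ (qSize_qSwap _ _ _ _) (qGood_swap hgX) sa1 sa2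

theorem alpha_trans {X Y Z : QTerm var varsort index bindex opsym}
    (hinf : Cardinal.aleph0 ≤ Cardinal.mk var) (hreg : (Cardinal.mk var).IsRegular)
    (hg : QGood X) (h1 : Alpha X Y) (h2 : Alpha Y Z) : Alpha X Z :=
  (grand_induction hinf hreg (qSize X)).2.2.1 X rfl hg Y Z h1 h2

theorem qswap_fresh_alpha {X : QTerm var varsort index bindex opsym}
    (hinf : Cardinal.aleph0 ≤ Cardinal.mk var) (hreg : (Cardinal.mk var).IsRegular)
    (hg : QGood X) {z1 z2 : var} {zs : varsort}
    (h1 : QFresh zs z1 X) (h2 : QFresh zs z2 X) : Alpha (qSwap z1 z2 zs X) X :=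
  (grand_induction hinf hreg (qSize X)).1 X rfl hg z1 z2 zs h1 h2

/-- Final form of the some/any lemma. -/
theorem alphaAbs_strong (hinf : Cardinal.aleph0 ≤ Cardinal.mk var)
    (hreg : (Cardinal.mk var).IsRegular)
    {xs : varsort} {x x' w : var} {X X' : QTerm var varsort index bindex opsym}
    (hgX : QGood X)
    (h : AlphaAbs (.qAbs xs x X) (.qAbs xs x' X'))
    (hw : w ∉ ({x, x'} : Set var)) (hwfX : QFresh xs w X) (hwfX' : QFresh xs w X') :
    Alpha (qSwap w x xs X) (qSwap w x' xs X') := by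
  cases h with
  | qAbs hu huf huf' ha =>
    rename_i u
    have hgX' : QGood X' := by
      have := alpha_good ha (qGood_swap hgX)
      exact qGood_swap_iff.1 this
    refine some_any_lemma hinf hreg hgX hgX' ?_ ?_ ?_ hu huf huf' ha hw hwfX hwfX'
    · intro P Q R' hsz hgp hpq hqr
      exact alpha_trans hinf hreg hgp hpq hqr
    · intro a b zs' h1 h2
      exact qswap_fresh_alpha hinf hreg hgX h1 h2
    · intro a b zs' h1 h2
      exact qswap_fresh_alpha hinf hreg hgX' h1 h2

end Dev7
section Dev8
variable {var varsort index bindex opsym : Type u}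

theorem eqvGen_good {a b : QTerm var varsort index bindex opsym}
    (h : Relation.EqvGen Alpha a b) : QGood a ↔ QGood b := by
  induction h with
  | rel _ _ h => exact alpha_good_iff h
  | refl => exact Iff.rfl
  | symm _ _ _ ih => exact ih.symm
  | trans _ _ _ _ _ ih1 ih2 => exact ih1.trans ih2

theorem eqvGen_alpha (hinf : Cardinal.aleph0 ≤ Cardinal.mk var)
    (hreg : (Cardinal.mk var).IsRegular)
    {a b : QTerm var varsort index bindex opsym}
    (h : Relation.EqvGen Alpha a b) (hg : QGood a) : Alpha a b := by
  induction h with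
  | rel _ _ h => exact h
  | refl => exact alpha_refl hinf hreg hg
  | symm x y hxy ih =>
    exact alpha_symm (ih ((eqvGen_good (Relation.EqvGen.symm _ _ hxy)).1 hg))
  | trans x y z hxy hyz ih1 ih2 =>
    have h1 := ih1 hg
    have h2 := ih2 ((eqvGen_good hxy).1 hg)
    exact alpha_trans hinf hreg hg h1 h2

theorem alpha_of_tmk_eq (hinf : Cardinal.aleph0 ≤ Cardinal.mk var)
    (hreg : (Cardinal.mk var).IsRegular)
    {a b : QTerm var varsort index bindex opsym}
    (h : tmk a = tmk b) (hg : QGood a) : Alpha a b :=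
  eqvGen_alpha hinf hreg (Quot.eqvGen_exact h) hg

theorem good_of_tmk_eq {a b : QTerm var varsort index bindex opsym}
    (h : tmk a = tmk b) (hg : QGood a) : QGood b :=
  (eqvGen_good (Quot.eqvGen_exact h)).1 hg

theorem tmk_trep (Z : Term var varsort index bindex opsym) : tmk (trep Z) = Z :=
  Quot.out_eq Z

theorem tmk_alpha {a b : QTerm var varsort index bindex opsym} (h : Alpha a b) :
    tmk a = tmk b := Quot.sound h

theorem qsubst_good_and :
    (∀ X : QTerm var varsort index bindex opsym, ∀ Y y ys Z,
      QSubst X Y y ys Z → QGood X → QGood Y → QGood Z) ∧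
    (∀ A : QAbs var varsort index bindex opsym, ∀ Y y ys B,
      QSubstAbs A Y y ys B → QGoodAbs A → QGood Y → QGoodAbs B) := by
  apply qsize_induction
  · intro X IH IHA Y y ys Z h hgX hgY
    cases h with
    | var_eq => exact hgY
    | var_ne hne => exact hgX
    | op hdom hc hbdom hbc =>
      rename_i d inp binp inp' binp'
      cases hgX with
      | qOp hi hb hsi hsb =>
        refine QGood.qOp ?_ ?_ ?_ ?_
        · intro i Zi hZi
          have hne : inp i ≠ none := fun hn => by
            rw [hdom i, hZi] at hn; exact Option.some_ne_none _ hn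
          rcases Option.ne_none_iff_exists'.1 hne with ⟨Xi, hXi⟩
          exact IH Xi (qSize_lt_of_inp hXi) Y y ys Zi (hc i Xi Zi hXi hZi)
            (hi i Xi hXi) hgY
        · intro j Bj hBj
          have hne : binp j ≠ none := fun hn => by
            rw [hbdom j, hBj] at hn; exact Option.some_ne_none _ hn
          rcases Option.ne_none_iff_exists'.1 hne with ⟨Aj, hAj⟩
          exact IHA Aj (qSizeAbs_lt_of_binp hAj) Y y ys Bj (hbc j Aj Bj hAj hBj)
            (hb j Aj hAj) hgY
        · rwa [smallDom, ← idom_congr hdom]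
        · rwa [smallDom, ← idom_congr hbdom]
  · intro A IH IHA Y y ys B h hgA hgY
    cases h with
    | abs hne hf hsub =>
      rename_i xs x X X'
      cases hgA with
      | qAbs h0 =>
        exact QGoodAbs.qAbs (IH X qSize_lt_qSizeAbs Y y ys X' hsub h0 hgY)

theorem qsubst_good {X Y Z : QTerm var varsort index bindex opsym} {y : var} {ys : varsort}
    (h : QSubst X Y y ys Z) (hgX : QGood X) (hgY : QGood Y) : QGood Z :=
  qsubst_good_and.1 X Y y ys Z h hgX hgY

theorem qsubst_swap_and (z1 z2 : var) (zs : varsort) :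
    (∀ X : QTerm var varsort index bindex opsym, ∀ Y y ys Z,
      QSubst X Y y ys Z →
      QSubst (qSwap z1 z2 zs X) (qSwap z1 z2 zs Y)
        (swapVarS var varsort zs ys z1 z2 y) ys (qSwap z1 z2 zs Z)) ∧
    (∀ A : QAbs var varsort index bindex opsym, ∀ Y y ys B,
      QSubstAbs A Y y ys B →
      QSubstAbs (qSwapAbs z1 z2 zs A) (qSwap z1 z2 zs Y)
        (swapVarS var varsort zs ys z1 z2 y) ys (qSwapAbs z1 z2 zs B)) := by
  apply qsize_induction
  · intro X IH IHA Y y ys Z h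
    cases h with
    | var_eq =>
      rw [qSwap_qVar]
      exact QSubst.var_eq
    | var_ne hne =>
      rename_i xs x
      rw [qSwap_qVar]
      refine QSubst.var_ne ?_
      intro hEq
      obtain ⟨e1, e2⟩ := Prod.mk.injEq .. ▸ hEq
      subst e1
      exact hne (Prod.ext rfl (swapVarS_inj e2))
    | op hdom hc hbdom hbc =>
      rename_i d inp binp inp' binp'
      rw [qSwap_qOp, qSwap_qOp]
      refine QSubst.op ?_ ?_ ?_ ?_
      · intro i; simp only [Option.map_eq_none_iff]; exact hdom i
      · intro i X₁ Z₁ h1 h2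
        rcases Option.map_eq_some_iff.1 h1 with ⟨Xi, hXi, rfl⟩
        rcases Option.map_eq_some_iff.1 h2 with ⟨Zi, hZi, rfl⟩
        exact IH Xi (qSize_lt_of_inp hXi) Y y ys Zi (hc i Xi Zi hXi hZi)
      · intro j; simp only [Option.map_eq_none_iff]; exact hbdom j
      · intro j A₁ B₁ h1 h2
        rcases Option.map_eq_some_iff.1 h1 with ⟨Aj, hAj, rfl⟩
        rcases Option.map_eq_some_iff.1 h2 with ⟨Bj, hBj, rfl⟩
        exact IHA Aj (qSizeAbs_lt_of_binp hAj) Y y ys Bj (hbc j Aj Bj hAj hBj)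
  · intro A IH IHA Y y ys B h
    cases h with
    | abs hne hf hsub =>
      rename_i xs x X X'
      rw [qSwapAbs_qAbs, qSwapAbs_qAbs]
      refine QSubstAbs.abs ?_ (qFresh_swap hf) ?_
      · intro hEq
        obtain ⟨e1, e2⟩ := Prod.mk.injEq .. ▸ hEq
        subst e1
        exact hne (Prod.ext rfl (swapVarS_inj e2))
      · exact IH X qSize_lt_qSizeAbs Y y ys X' hsub

theorem qsubst_swap {X Y Z : QTerm var varsort index bindex opsym} {y : var} {ys : varsort}
    (z1 z2 : var) (zs : varsort) (h : QSubst X Y y ys Z) :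
    QSubst (qSwap z1 z2 zs X) (qSwap z1 z2 zs Y)
      (swapVarS var varsort zs ys z1 z2 y) ys (qSwap z1 z2 zs Z) :=
  (qsubst_swap_and z1 z2 zs).1 X Y y ys Z h

end Dev8
section Dev9
variable {var varsort index bindex opsym : Type u}

theorem alphaAbs_trans (hinf : Cardinal.aleph0 ≤ Cardinal.mk var)
    (hreg : (Cardinal.mk var).IsRegular)
    {A B C : QAbs var varsort index bindex opsym}
    (hg : QGoodAbs A) (h1 : AlphaAbs A B) (h2 : AlphaAbs B C) : AlphaAbs A C :=
  (grand_induction hinf hreg (qSizeAbs A)).2.2.2 A rfl hg B C h1 h2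

theorem qsubst_exists_and (hinf : Cardinal.aleph0 ≤ Cardinal.mk var)
    (hreg : (Cardinal.mk var).IsRegular)
    (Y : QTerm var varsort index bindex opsym) (hgY : QGood Y) (y : var) (ys : varsort) :
    (∀ X : QTerm var varsort index bindex opsym, QGood X →
      ∃ X' Z, Alpha X X' ∧ QSubst X' Y y ys Z) ∧
    (∀ A : QAbs var varsort index bindex opsym, QGoodAbs A →
      ∃ A' B, AlphaAbs A A' ∧ QSubstAbs A' Y y ys B) := by
  apply qsize_induction
  · intro X IH IHA hg
    cases X with
    | qVar xs x =>
      by_cases h : (xs, x) = (ys, y)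
      · obtain ⟨e1, e2⟩ := Prod.mk.injEq .. ▸ h
        subst e1; subst e2
        exact ⟨_, Y, Alpha.qVar, QSubst.var_eq⟩
      · exact ⟨_, _, Alpha.qVar, QSubst.var_ne h⟩
    | qOp d inp binp =>
      cases hg with
      | qOp hi hb hsi hsb =>
        have hchoice : ∀ i, ∃ o : Option (QTerm var varsort index bindex opsym) ×
            Option (QTerm var varsort index bindex opsym),
            (inp i = none → o = (none, none)) ∧
            (∀ Xi, inp i = some Xi → ∃ Xi' Zi, o = (some Xi', some Zi) ∧
              Alpha Xi Xi' ∧ QSubst Xi' Y y ys Zi) := by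
          intro i
          cases hv : inp i with
          | none => exact ⟨(none, none), fun _ => rfl, fun Xi h => by simp at h⟩
          | some Xi =>
            rcases IH Xi (qSize_lt_of_inp hv) (hi i Xi hv) with ⟨Xi', Zi, ha, hsub⟩
            refine ⟨(some Xi', some Zi), fun h => by simp at h, ?_⟩
            intro Xi₂ h
            cases Option.some.inj h
            exact ⟨Xi', Zi, rfl, ha, hsub⟩
        have hbchoice : ∀ j, ∃ o : Option (QAbs var varsort index bindex opsym) ×
            Option (QAbs var varsort index bindex opsym),
            (binp j = none → o = (none, none)) ∧
            (∀ Aj, binp j = some Aj → ∃ Aj' Bj, o = (some Aj', some Bj) ∧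
              AlphaAbs Aj Aj' ∧ QSubstAbs Aj' Y y ys Bj) := by
          intro j
          cases hv : binp j with
          | none => exact ⟨(none, none), fun _ => rfl, fun Aj h => by simp at h⟩
          | some Aj =>
            rcases IHA Aj (qSizeAbs_lt_of_binp hv) (hb j Aj hv) with ⟨Aj', Bj, ha, hsub⟩
            refine ⟨(some Aj', some Bj), fun h => by simp at h, ?_⟩
            intro Aj₂ h
            cases Option.some.inj h
            exact ⟨Aj', Bj, rfl, ha, hsub⟩
        choose f hf1 hf2 using hchoice
        choose g hg1 hg2 using hbchoice
        refine ⟨.qOp d (fun i => (f i).1) (fun j => (g j).1),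
          .qOp d (fun i => (f i).2) (fun j => (g j).2), ?_, ?_⟩
        · refine Alpha.qOp ?_ ?_ ?_ ?_
          · intro i
            constructor
            · intro h; rw [hf1 i h]
            · intro h
              cases hv : inp i with
              | none => rfl
              | some Xi =>
                rcases hf2 i Xi hv with ⟨Xi', Zi, he, _, _⟩
                rw [he] at h
                simp at h
          · intro i Xi Xi' h1 h2
            rcases hf2 i Xi h1 with ⟨Xi'', Zi, he, ha, _⟩
            rw [he] at h2
            cases Option.some.inj h2
            exact ha
          · intro j
            constructor
            · intro h; rw [hg1 j h]
            · intro h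
              cases hv : binp j with
              | none => rfl
              | some Aj =>
                rcases hg2 j Aj hv with ⟨Aj', Bj, he, _, _⟩
                rw [he] at h
                simp at h
          · intro j Aj Aj' h1 h2
            rcases hg2 j Aj h1 with ⟨Aj'', Bj, he, ha, _⟩
            rw [he] at h2
            cases Option.some.inj h2
            exact ha
        · refine QSubst.op ?_ ?_ ?_ ?_
          · intro i
            constructor
            · intro h
              cases hv : inp i with
              | none => rw [hf1 i hv]
              | some Xi =>
                rcases hf2 i Xi hv with ⟨Xi', Zi, he, _, _⟩
                rw [he] at h
                simp at h
            · intro h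
              cases hv : inp i with
              | none => rw [hf1 i hv]
              | some Xi =>
                rcases hf2 i Xi hv with ⟨Xi', Zi, he, _, _⟩
                rw [he] at h
                simp at h
          · intro i Xi' Zi h1 h2
            cases hv : inp i with
            | none =>
              rw [hf1 i hv] at h1
              simp at h1
            | some Xi =>
              rcases hf2 i Xi hv with ⟨Xi'', Zi', he, _, hsub⟩
              rw [he] at h1 h2
              cases Option.some.inj h1
              cases Option.some.inj h2
              exact hsub
          · intro j
            constructor
            · intro h
              cases hv : binp j with
              | none => rw [hg1 j hv]
              | some Aj =>
                rcases hg2 j Aj hv with ⟨Aj', Bj, he, _, _⟩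
                rw [he] at h
                simp at h
            · intro h
              cases hv : binp j with
              | none => rw [hg1 j hv]
              | some Aj =>
                rcases hg2 j Aj hv with ⟨Aj', Bj, he, _, _⟩
                rw [he] at h
                simp at h
          · intro j Aj' Bj h1 h2
            cases hv : binp j with
            | none =>
              rw [hg1 j hv] at h1
              simp at h1
            | some Aj =>
              rcases hg2 j Aj hv with ⟨Aj'', Bj', he, _, hsub⟩
              rw [he] at h1 h2
              cases Option.some.inj h1
              cases Option.some.inj h2
              exact hsub
  · intro A IH IHA hg
    cases A with
    | qAbs xs x X0 =>
      cases hg with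
      | qAbs hg0 =>
        rcases exists_fresh hinf hreg xs [X0, Y] (by
          intro Z hZ
          simp only [List.mem_cons, List.mem_singleton, List.not_mem_nil, or_false] at hZ
          rcases hZ with rfl | rfl
          · exact hg0
          · exact hgY) [x, y] with ⟨u, huav, hufr⟩
        have hux : u ≠ x := fun h => huav (by simp [h])
        have huy : u ≠ y := fun h => huav (by simp [h])
        have hufX0 : QFresh xs u X0 := hufr X0 (by simp)
        have hufY : QFresh xs u Y := hufr Y (by simp)
        set X1 := qSwap u x xs X0 with hX1
        have hgX1 : QGood X1 := qGood_swap hg0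
        rcases IH X1 (by rw [hX1, qSize_qSwap]; exact qSize_lt_qSizeAbs) hgX1
          with ⟨X1', Z1, ha1, hsub1⟩
        refine ⟨.qAbs xs u X1', .qAbs xs u Z1, ?_, ?_⟩
        · have step1 : AlphaAbs (.qAbs xs x X0) (.qAbs xs u X1) :=
            alphaAbs_symm (rename_lemma hinf hreg hg0
              (fun a b zs' h1 h2 => qswap_fresh_alpha hinf hreg hg0 h1 h2) hufX0)
          have step2 : AlphaAbs (.qAbs xs u X1) (.qAbs xs u X1') :=
            alphaAbs_cong hinf hreg xs u hgX1 ha1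
          exact alphaAbs_trans hinf hreg (QGoodAbs.qAbs hg0) step1 step2
        · refine QSubstAbs.abs ?_ hufY hsub1
          intro hEq
          obtain ⟨e1, e2⟩ := Prod.mk.injEq .. ▸ hEq
          exact huy e2

end Dev9
section Dev10
variable {var varsort index bindex opsym : Type u}

theorem qsubst_unique_and (hinf : Cardinal.aleph0 ≤ Cardinal.mk var)
    (hreg : (Cardinal.mk var).IsRegular) (y : var) (ys : varsort) :
    (∀ X : QTerm var varsort index bindex opsym, QGood X →
      ∀ X' Y Y' Z Z', QGood Y → Alpha X X' → Alpha Y Y' →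
        QSubst X Y y ys Z → QSubst X' Y' y ys Z' → Alpha Z Z') ∧
    (∀ A : QAbs var varsort index bindex opsym, QGoodAbs A →
      ∀ A' Y Y' B B', QGood Y → AlphaAbs A A' → Alpha Y Y' →
        QSubstAbs A Y y ys B → QSubstAbs A' Y' y ys B' → AlphaAbs B B') := by
  have main := qsize_induction
    (P := fun X : QTerm var varsort index bindex opsym => QGood X →
      ∀ X' Y Y' Z Z', QGood Y → Alpha X X' → Alpha Y Y' →
        QSubst X Y y ys Z → QSubst X' Y' y ys Z' → Alpha Z Z')
    (Q := fun A : QAbs var varsort index bindex opsym => QGoodAbs A →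
      ∀ A' Y Y' B B', QGood Y → AlphaAbs A A' → Alpha Y Y' →
        QSubstAbs A Y y ys B → QSubstAbs A' Y' y ys B' → AlphaAbs B B')
  apply main <;> clear main
  · intro X IH IHA hg X' Y Y' Z Z' hgY hXX' hYY' hs1 hs2
    cases X with
    | qVar xs x =>
      cases hXX' with
      | qVar =>
        cases hs1 with
        | var_eq =>
          cases hs2 with
          | var_eq => exact hYY'
          | var_ne hne => exact absurd rfl hne
        | var_ne hne =>
          cases hs2 with
          | var_eq => exact absurd rfl hne
          | var_ne hne' => exact Alpha.qVar
    | qOp d inp binp =>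
      cases hXX' with
      | qOp hdom₂ hc₂ hbdom₂ hbc₂ =>
        rename_i inp₂ binp₂
        cases hs1 with
        | op hdom₁ hc₁ hbdom₁ hbc₁ =>
          rename_i inp₁ binp₁
          cases hs2 with
          | op hdom₃ hc₃ hbdom₃ hbc₃ =>
            rename_i inp₃ binp₃
            cases hg with
            | qOp hi hb hsi hsb =>
              refine Alpha.qOp ?_ ?_ ?_ ?_
              · intro i
                rw [← hdom₁ i, hdom₂ i, hdom₃ i]
              · intro i Zi Zi' h1 h2
                have hne : inp i ≠ none := fun hn => by
                  rw [hdom₁ i, h1] at hn; exact Option.some_ne_none _ hn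
                rcases Option.ne_none_iff_exists'.1 hne with ⟨Xi, hXi⟩
                have hne₂ : inp₂ i ≠ none := fun hn => by
                  rw [← hdom₂ i] at hn; exact hne hn
                rcases Option.ne_none_iff_exists'.1 hne₂ with ⟨Xi₂, hXi₂⟩
                exact IH Xi (qSize_lt_of_inp hXi) (hi i Xi hXi) Xi₂ Y Y' Zi Zi' hgY
                  (hc₂ i Xi Xi₂ hXi hXi₂) hYY' (hc₁ i Xi Zi hXi h1)
                  (hc₃ i Xi₂ Zi' hXi₂ h2)
              · intro j
                rw [← hbdom₁ j, hbdom₂ j, hbdom₃ j]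
              · intro j Bj Bj' h1 h2
                have hne : binp j ≠ none := fun hn => by
                  rw [hbdom₁ j, h1] at hn; exact Option.some_ne_none _ hn
                rcases Option.ne_none_iff_exists'.1 hne with ⟨Aj, hAj⟩
                have hne₂ : binp₂ j ≠ none := fun hn => by
                  rw [← hbdom₂ j] at hn; exact hne hn
                rcases Option.ne_none_iff_exists'.1 hne₂ with ⟨Aj₂, hAj₂⟩
                exact IHA Aj (qSizeAbs_lt_of_binp hAj) (hb j Aj hAj) Aj₂ Y Y' Bj Bj' hgY
                  (hbc₂ j Aj Aj₂ hAj hAj₂) hYY' (hbc₁ j Aj Bj hAj h1)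
                  (hbc₃ j Aj₂ Bj' hAj₂ h2)
  · intro A IH IHA hgA A' Y Y' B B' hgY hAA' hYY' hs1 hs2
    cases hAA' with
    | qAbs hu huf huf' ha =>
      rename_i xs x x' X X₂ u
      cases hs1 with
      | abs hne1 hfY hsub1 =>
        rename_i ZX
        cases hs2 with
        | abs hne2 hfY' hsub2 =>
          rename_i ZX'
          cases hgA with
          | qAbs hgX =>
            have hgX₂ : QGood X₂ := by
              have := alpha_good ha (qGood_swap hgX)
              exact qGood_swap_iff.1 this
            have hgY' : QGood Y' := alpha_good hYY' hgY
            have hgZX : QGood ZX := qsubst_good hsub1 hgX hgY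
            have hgZX' : QGood ZX' := qsubst_good hsub2 hgX₂ hgY'
            rcases exists_fresh hinf hreg xs [X, X₂, ZX, ZX', Y, Y'] (by
              intro W hW
              simp only [List.mem_cons, List.mem_singleton, List.not_mem_nil,
                or_false] at hW
              rcases hW with rfl | rfl | rfl | rfl | rfl | rfl
              · exact hgX
              · exact hgX₂
              · exact hgZX
              · exact hgZX'
              · exact hgY
              · exact hgY') [x, x', y] with ⟨w, hwav, hwfr⟩
            have hwx : w ≠ x := fun h => hwav (by simp [h])
            have hwx' : w ≠ x' := fun h => hwav (by simp [h])
            have hwy : w ≠ y := fun h => hwav (by simp [h])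
            have hwfX : QFresh xs w X := hwfr X (by simp)
            have hwfX₂ : QFresh xs w X₂ := hwfr X₂ (by simp)
            have hwfZX : QFresh xs w ZX := hwfr ZX (by simp)
            have hwfZX' : QFresh xs w ZX' := hwfr ZX' (by simp)
            have hwfY : QFresh xs w Y := hwfr Y (by simp)
            have hwfY' : QFresh xs w Y' := hwfr Y' (by simp)
            have h1 : Alpha (qSwap w x xs X) (qSwap w x' xs X₂) :=
              alphaAbs_strong hinf hreg hgX (AlphaAbs.qAbs hu huf huf' ha)
                (by
                  intro hmem
                  rcases hmem with h | h
                  · exact hwx h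
                  · exact hwx' h) hwfX hwfX₂
            have t1 := qsubst_swap w x xs hsub1
            have t2 := qsubst_swap w x' xs hsub2
            have hne_w : (xs, w) ≠ (ys, y) := fun h => hwy (congrArg Prod.snd h)
            rw [swapVarS_of_ne hne_w hne1] at t1
            rw [swapVarS_of_ne hne_w hne2] at t2
            have aY : Alpha (qSwap w x xs Y) Y :=
              qswap_fresh_alpha hinf hreg hgY hwfY hfY
            have aY' : Alpha (qSwap w x' xs Y') Y' :=
              qswap_fresh_alpha hinf hreg hgY' hwfY' hfY'
            have hYpair : Alpha (qSwap w x xs Y) (qSwap w x' xs Y') := by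
              refine alpha_trans hinf hreg (qGood_swap hgY) aY ?_
              exact alpha_trans hinf hreg hgY hYY' (alpha_symm aY')
            have hZpair : Alpha (qSwap w x xs ZX) (qSwap w x' xs ZX') :=
              IH (qSwap w x xs X) (by rw [qSize_qSwap]; exact qSize_lt_qSizeAbs)
                (qGood_swap hgX) (qSwap w x' xs X₂) (qSwap w x xs Y)
                (qSwap w x' xs Y') (qSwap w x xs ZX) (qSwap w x' xs ZX')
                (qGood_swap hgY) h1 hYpair t1 t2
            refine AlphaAbs.qAbs (y := w) ?_ hwfZX hwfZX' hZpair
            intro hmem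
            rcases hmem with h | h
            · exact hwx h
            · exact hwx' h

theorem qsubst_unique (hinf : Cardinal.aleph0 ≤ Cardinal.mk var)
    (hreg : (Cardinal.mk var).IsRegular) {y : var} {ys : varsort}
    {X X' Y Y' Z Z' : QTerm var varsort index bindex opsym}
    (hgX : QGood X) (hgY : QGood Y) (hXX' : Alpha X X') (hYY' : Alpha Y Y')
    (hs1 : QSubst X Y y ys Z) (hs2 : QSubst X' Y' y ys Z') : Alpha Z Z' :=
  (qsubst_unique_and hinf hreg y ys).1 X hgX X' Y Y' Z Z' hgY hXX' hYY' hs1 hs2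

end Dev10
/-- swapping distributes over substitution. -/
theorem swap_subst (hinf : Cardinal.aleph0 ≤ Cardinal.mk var)
    (hreg : (Cardinal.mk var).IsRegular)
    (X Y : Term var varsort index bindex opsym) (hX : good X) (hY : good Y)
    (x z1 z2 : var) (xs zs : varsort) :
    tswap (subst Y X x xs) z1 z2 zs =
      subst (tswap Y z1 z2 zs) (tswap X z1 z2 zs)
        (swapVarS var varsort zs xs z1 z2 x) xs := by
  set x' := swapVarS var varsort zs xs z1 z2 x with hx'
  have hgX : QGood (trep X) := hX
  have hgY : QGood (trep Y) := hY
  -- goodness of swapped representatives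
  have hgXsw : QGood (qSwap z1 z2 zs (trep X)) := qGood_swap hgX
  have hgYsw : QGood (qSwap z1 z2 zs (trep Y)) := qGood_swap hgY
  have htswapX : tmk (qSwap z1 z2 zs (trep X)) = tswap X z1 z2 zs := rfl
  have htswapY : tmk (qSwap z1 z2 zs (trep Y)) = tswap Y z1 z2 zs := rfl
  have hgXsw' : QGood (trep (tswap X z1 z2 zs)) :=
    good_of_tmk_eq (htswapX.trans (tmk_trep _).symm) hgXsw
  have hgYsw' : QGood (trep (tswap Y z1 z2 zs)) :=
    good_of_tmk_eq (htswapY.trans (tmk_trep _).symm) hgYsw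
  -- existence on the left
  obtain ⟨qY1, qS1, haY1, hsub1⟩ :=
    (qsubst_exists_and hinf hreg (trep X) hgX x xs).1 (trep Y) hgY
  have hEx1 : ∃ Z, SubstRel Y X x xs Z :=
    ⟨tmk qS1, qY1, qS1, (tmk_alpha haY1).symm.trans (tmk_trep Y), rfl, hsub1⟩
  -- existence on the right
  obtain ⟨qY3, qS3, haY3, hsub3⟩ :=
    (qsubst_exists_and hinf hreg (trep (tswap X z1 z2 zs)) hgXsw' x' xs).1
      (trep (tswap Y z1 z2 zs)) hgYsw'
  have hEx2 : ∃ Z, SubstRel (tswap Y z1 z2 zs) (tswap X z1 z2 zs) x' xs Z :=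
    ⟨tmk qS3, qY3, qS3, (tmk_alpha haY3).symm.trans (tmk_trep _), rfl, hsub3⟩
  rw [subst, subst, dif_pos hEx1, dif_pos hEx2]
  -- specs
  obtain ⟨qY2, qS2, hq1, hq2, hsub2⟩ := hEx1.choose_spec
  obtain ⟨qY4, qS4, hq3, hq4, hsub4⟩ := hEx2.choose_spec
  have hgqY2 : QGood qY2 := good_of_tmk_eq ((tmk_trep Y).trans hq1.symm) hgY
  have hgqS2 : QGood qS2 := qsubst_good hsub2 hgqY2 hgX
  -- transport the left derivation by the swap
  have t := qsubst_swap (X := qY2) (Y := trep X) (Z := qS2) z1 z2 zs hsub2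
  -- X-pair alpha
  have haqY2 : Alpha qY2 (trep Y) := alpha_of_tmk_eq hinf hreg
    (hq1.trans (tmk_trep Y).symm) hgqY2
  have hXX' : Alpha (qSwap z1 z2 zs qY2) qY4 := by
    refine alpha_of_tmk_eq hinf hreg ?_ (qGood_swap hgqY2)
    calc tmk (qSwap z1 z2 zs qY2) = tmk (qSwap z1 z2 zs (trep Y)) :=
          tmk_alpha (alpha_swap haqY2)
      _ = tswap Y z1 z2 zs := htswapY
      _ = tmk qY4 := hq3.symm
  -- Y-pair alpha
  have hYY' : Alpha (qSwap z1 z2 zs (trep X)) (trep (tswap X z1 z2 zs)) :=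
    alpha_of_tmk_eq hinf hreg (htswapX.trans (tmk_trep _).symm) hgXsw
  -- uniqueness
  have hfinal : Alpha (qSwap z1 z2 zs qS2) qS4 :=
    qsubst_unique hinf hreg (qGood_swap hgqY2) hgXsw hXX' hYY' t hsub4
  -- conclude
  have haS2 : Alpha qS2 (trep hEx1.choose) :=
    alpha_of_tmk_eq hinf hreg (hq2.trans (tmk_trep _).symm) hgqS2
  calc tswap hEx1.choose z1 z2 zs
      = tmk (qSwap z1 z2 zs (trep hEx1.choose)) := rfl
    _ = tmk (qSwap z1 z2 zs qS2) := (tmk_alpha (alpha_swap haS2)).symm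
    _ = tmk qS4 := tmk_alpha hfinal
    _ = hEx2.choose := hq4

end Binding
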